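/- arXiv:2302.04715 — 8 statements merged into one kernel-verified Lean document; each statement's English description precedes it below -/
import Mathlib

section
/- Let L : (0,∞) → (0,∞) be a measurable slowly varying function in Karamata's sense that is locally integrable on [A,∞) for some A > 0. Then for every α < −1, the function t ↦ t^{α} L(t) is integrable on [x,∞) for all sufficiently large x, and −(∫_x^∞ t^{α} L(t) dt) / (x^{α+1} L(x)) → 1/(α+1) as x → ∞. (Lemma 1, part (4); Karamata's theorem.) -/
open Filter MeasureTheory Set
open scoped ENNReal Pointwise

lemma karamata_fatou_sets (S : ℕ → Set ℝ) (hS : ∀ n, MeasurableSet (S n)) {T : Set ℝ}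
    (hTm : MeasurableSet T) (hT : ∀ v ∈ T, ∀ᶠ n in atTop, v ∈ S n) :
    volume T ≤ atTop.liminf (fun n => volume (S n)) := by
  calc volume T = ∫⁻ v, T.indicator (1 : ℝ → ℝ≥0∞) v := (lintegral_indicator_one hTm).symm
    _ ≤ ∫⁻ v, atTop.liminf (fun n => (S n).indicator (1 : ℝ → ℝ≥0∞) v) := by
        refine lintegral_mono fun v => ?_
        by_cases hv : v ∈ T
        · have h1 : T.indicator (1 : ℝ → ℝ≥0∞) v = 1 := by simp [hv]
          rw [h1]
          refine le_liminf_of_le (by isBoundedDefault) ?_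
          filter_upwards [hT v hv] with n hn
          simp [hn]
        · simp [hv]
    _ ≤ atTop.liminf (fun n => ∫⁻ v, (S n).indicator (1 : ℝ → ℝ≥0∞) v) :=
        lintegral_liminf_le (fun n => (measurable_one.indicator (hS n)))
    _ = atTop.liminf (fun n => volume (S n)) := by
        simp_rw [lintegral_indicator_one (hS _)]

lemma karamata_uct (h : ℝ → ℝ) (hm : Measurable h)
    (hc : ∀ u : ℝ, Tendsto (fun y => h (y + u) - h y) atTop (nhds 0)) :
    ∀ ε > (0:ℝ), ∀ᶠ y in atTop, ∀ u ∈ Icc (0:ℝ) 1, |h (y + u) - h y| < ε := by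
  intro ε hε
  by_contra hcon
  rw [Filter.not_eventually] at hcon
  have hfreq : ∀ a : ℝ, ∃ y ≥ a, ∃ u ∈ Icc (0:ℝ) 1, ε ≤ |h (y + u) - h y| := by
    intro a
    obtain ⟨y, hy, hy2⟩ := (frequently_atTop.mp hcon) a
    push_neg at hy2
    obtain ⟨u, hu1, hu2⟩ := hy2
    exact ⟨y, hy, u, hu1, hu2⟩
  choose y hy u hu hbad using fun n : ℕ => hfreq n
  have hyT : Tendsto y atTop atTop :=
    tendsto_atTop_mono hy tendsto_natCast_atTop_atTop
  have hyuT : Tendsto (fun n => y n + u n) atTop atTop :=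
    tendsto_atTop_mono (fun n => le_add_of_nonneg_right (hu n).1) hyT
  -- the sets
  set Y : ℕ → Set ℝ := fun n => Icc (0:ℝ) 2 ∩ {v | |h (y n + v) - h (y n)| < ε/3} with hY
  set V : ℕ → Set ℝ := fun n => Icc (0:ℝ) 2 ∩ {v | |h (y n + u n + v) - h (y n + u n)| < ε/3}
    with hV
  have hmeas : ∀ (c : ℝ) (b : ℝ),
      MeasurableSet (Icc (0:ℝ) 2 ∩ {v | |h (c + v) - b| < ε/3}) := by
    intro c b
    refine measurableSet_Icc.inter ?_
    have : Measurable fun v => |h (c + v) - b| :=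
      (((hm.comp (measurable_const.add measurable_id)).sub measurable_const).abs)
    exact measurableSet_lt this measurable_const
  have hYm : ∀ n, MeasurableSet (Y n) := fun n => hmeas _ _
  have hVm : ∀ n, MeasurableSet (V n) := fun n => hmeas _ _
  -- eventual membership
  have hmemY : ∀ v ∈ Icc (0:ℝ) 2, ∀ᶠ n in atTop, v ∈ Y n := by
    intro v hv
    have := ((hc v).comp hyT)
    have h2 := (Metric.tendsto_nhds.mp this) (ε/3) (by positivity)
    filter_upwards [h2] with n hn
    refine ⟨hv, ?_⟩
    simpa [Real.dist_eq] using hn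
  have hmemV : ∀ v ∈ Icc (0:ℝ) 2, ∀ᶠ n in atTop, v ∈ V n := by
    intro v hv
    have := ((hc v).comp hyuT)
    have h2 := (Metric.tendsto_nhds.mp this) (ε/3) (by positivity)
    filter_upwards [h2] with n hn
    refine ⟨hv, ?_⟩
    simpa [Real.dist_eq] using hn
  -- disjointness
  have hdisj : ∀ n, Disjoint (Y n) (u n +ᵥ V n) := by
    intro n
    rw [Set.disjoint_left]
    rintro z ⟨hz2, hz3⟩ hzV
    obtain ⟨w, hw, hwz⟩ := hzV
    obtain ⟨hw2, hw3⟩ := hw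
    have hzw : y n + z = y n + u n + w := by
      simp only [vadd_eq_add] at hwz; linarith [hwz]
    have : |h (y n + u n) - h (y n)| < ε := by
      have hz3' : |h (y n + z) - h (y n)| < ε/3 := hz3
      have h4 : |h (y n + u n + w) - h (y n + u n)| < ε/3 := hw3
      rw [← hzw] at h4
      have e1 := abs_sub_lt_iff.mp hz3'
      have e2 := abs_sub_lt_iff.mp h4
      rw [abs_sub_lt_iff]
      constructor <;> linarith [e1.1, e1.2, e2.1, e2.2]
    exact absurd (hbad n) (not_le.mpr this)
  -- measures
  have hsum_le : ∀ n, volume (Y n) + volume (V n) ≤ ENNReal.ofReal 3 := by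
    intro n
    have hsub : Y n ∪ (u n +ᵥ V n) ⊆ Icc (0:ℝ) 3 := by
      rintro z (hz | hz)
      · exact ⟨hz.1.1, by linarith [hz.1.2]⟩
      · obtain ⟨w, hw, hwz⟩ := hz
        simp only [vadd_eq_add] at hwz
        subst hwz
        exact ⟨by linarith [hw.1.1, (hu n).1], by linarith [hw.1.2, (hu n).2]⟩
    calc volume (Y n) + volume (V n)
        = volume (Y n) + volume (u n +ᵥ V n) := by rw [measure_vadd]
      _ = volume (Y n ∪ (u n +ᵥ V n)) :=
          (measure_union (hdisj n) ((hVm n).const_vadd _)).symm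
      _ ≤ volume (Icc (0:ℝ) 3) := measure_mono hsub
      _ = ENNReal.ofReal 3 := by rw [Real.volume_Icc]; norm_num
  -- liminf lower bounds
  have h2Y : ENNReal.ofReal 2 ≤ atTop.liminf (fun n => volume (Y n)) := by
    have := karamata_fatou_sets Y hYm measurableSet_Icc hmemY
    rwa [Real.volume_Icc, show (2:ℝ) - 0 = 2 by ring] at this
  have h2V : ENNReal.ofReal 2 ≤ atTop.liminf (fun n => volume (V n)) := by
    have := karamata_fatou_sets V hVm measurableSet_Icc hmemV
    rwa [Real.volume_Icc, show (2:ℝ) - 0 = 2 by ring] at this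
  have hltY : ∀ᶠ n in atTop, ENNReal.ofReal (3/2) < volume (Y n) :=
    eventually_lt_of_lt_liminf (lt_of_lt_of_le (by
      rw [ENNReal.ofReal_lt_ofReal_iff] <;> norm_num) h2Y)
  have hltV : ∀ᶠ n in atTop, ENNReal.ofReal (3/2) < volume (V n) :=
    eventually_lt_of_lt_liminf (lt_of_lt_of_le (by
      rw [ENNReal.ofReal_lt_ofReal_iff] <;> norm_num) h2V)
  obtain ⟨n, hn1, hn2⟩ := (hltY.and hltV).exists
  have : ENNReal.ofReal 3 < volume (Y n) + volume (V n) := by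
    calc ENNReal.ofReal 3 = ENNReal.ofReal (3/2) + ENNReal.ofReal (3/2) := by
          rw [← ENNReal.ofReal_add] <;> norm_num
      _ < volume (Y n) + volume (V n) := ENNReal.add_lt_add hn1 hn2
  exact absurd (hsum_le n) (not_le.mpr this)

lemma karamata_potter (L : ℝ → ℝ) (hLmeas : Measurable L) (hLpos : ∀ x > 0, 0 < L x)
    (hLsv : ∀ c > 0, Tendsto (fun x => L (c * x) / L x) atTop (nhds 1)) :
    ∀ ε > (0:ℝ), ∃ X ≥ (1:ℝ), ∀ x ≥ X, ∀ l, 1 ≤ l →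
      L (l * x) ≤ Real.exp ε * l ^ ε * L x := by
  intro ε hε
  set h : ℝ → ℝ := fun y => Real.log (L (Real.exp y)) with hh
  have hm : Measurable h := (Real.measurable_log.comp (hLmeas.comp Real.measurable_exp))
  have hc : ∀ u : ℝ, Tendsto (fun y => h (y + u) - h y) atTop (nhds 0) := by
    intro u
    have h1 : Tendsto (fun y => Real.log (L (Real.exp u * Real.exp y) / L (Real.exp y)))
        atTop (nhds 0) := by
      have := ((hLsv (Real.exp u) (Real.exp_pos u)).comp Real.tendsto_exp_atTop)
      have hlog := this.log one_ne_zero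
      simpa using hlog
    refine h1.congr (fun y => ?_)
    rw [Real.log_div (hLpos _ (by positivity)).ne' (hLpos _ (Real.exp_pos y)).ne']
    simp only [hh]
    rw [Real.exp_add, mul_comm]
  obtain ⟨Y, hY⟩ := (karamata_uct h hm hc ε hε).exists_forall_of_atTop
  set X : ℝ := max 1 (Real.exp Y) with hX
  have hX1 : (1:ℝ) ≤ X := le_max_left _ _
  refine ⟨X, hX1, ?_⟩
  -- multiplicative key bound
  have key : ∀ x ≥ X, ∀ c, 1 ≤ c → c ≤ Real.exp 1 → L (c * x) ≤ Real.exp ε * L x := by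
    intro x hx c hc1 hce
    have hx0 : (0:ℝ) < x := lt_of_lt_of_le one_pos (le_trans hX1 hx)
    have hlogx : Y ≤ Real.log x := by
      rw [← Real.log_exp Y]
      exact Real.log_le_log (Real.exp_pos Y) (le_trans (le_max_right _ _) hx)
    have hu : Real.log c ∈ Icc (0:ℝ) 1 := by
      constructor
      · exact Real.log_nonneg hc1
      · rw [← Real.log_exp 1]
        exact Real.log_le_log (lt_of_lt_of_le one_pos hc1) hce
    have := hY (Real.log x) hlogx (Real.log c) hu
    have heq : h (Real.log x + Real.log c) - h (Real.log x)
        = Real.log (L (c * x)) - Real.log (L x) := by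
      simp only [hh]
      rw [Real.exp_add, Real.exp_log hx0, Real.exp_log (lt_of_lt_of_le one_pos hc1), mul_comm]
    rw [heq] at this
    have h2 : Real.log (L (c * x)) ≤ Real.log (L x) + ε := by
      have := (abs_sub_lt_iff.mp this).1
      linarith
    calc L (c * x) = Real.exp (Real.log (L (c * x))) :=
          (Real.exp_log (hLpos _ (by positivity))).symm
      _ ≤ Real.exp (Real.log (L x) + ε) := Real.exp_le_exp.mpr h2
      _ = Real.exp ε * L x := by
          rw [Real.exp_add, Real.exp_log (hLpos _ hx0), mul_comm]
  -- chaining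
  have chain : ∀ n : ℕ, ∀ l, 1 ≤ l → l ≤ Real.exp n → ∀ x ≥ X,
      L (l * x) ≤ Real.exp (ε * n) * L x := by
    intro n
    induction n with
    | zero =>
      intro l hl1 hle x hx
      have : l = 1 := le_antisymm (by simpa using hle) hl1
      subst this
      simp
    | succ n ih =>
      intro l hl1 hle x hx
      push_cast at hle ⊢
      have hx0 : (0:ℝ) < x := lt_of_lt_of_le one_pos (le_trans hX1 hx)
      by_cases hcase : l ≤ Real.exp 1
      · calc L (l * x) ≤ Real.exp ε * L x := key x hx l hl1 hcase
          _ ≤ Real.exp (ε * (n + 1)) * L x := by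
              have h0 : ε ≤ ε * (n+1) := by nlinarith [Nat.cast_nonneg (α := ℝ) n]
              have := Real.exp_le_exp.mpr h0
              nlinarith [(hLpos x hx0)]
      · push_neg at hcase
        have hle1 : (1:ℝ) ≤ l / Real.exp 1 := by
          rw [le_div_iff₀ (Real.exp_pos 1)]; linarith
        have hle2 : l / Real.exp 1 ≤ Real.exp n := by
          rw [div_le_iff₀ (Real.exp_pos 1), ← Real.exp_add]
          exact hle
        have hxx : (l / Real.exp 1) * x ≥ X := by
          calc X ≤ x := hx
            _ = 1 * x := (one_mul x).symm
            _ ≤ (l / Real.exp 1) * x := by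
                apply mul_le_mul_of_nonneg_right hle1 hx0.le
        have h1 : L (Real.exp 1 * ((l / Real.exp 1) * x)) ≤
            Real.exp ε * L ((l / Real.exp 1) * x) :=
          key _ hxx (Real.exp 1) (Real.one_le_exp one_pos.le) le_rfl
        have h2 : L ((l / Real.exp 1) * x) ≤ Real.exp (ε * n) * L x := ih _ hle1 hle2 x hx
        have heq : Real.exp 1 * ((l / Real.exp 1) * x) = l * x := by
          field_simp
        rw [heq] at h1
        calc L (l * x) ≤ Real.exp ε * L ((l / Real.exp 1) * x) := h1
          _ ≤ Real.exp ε * (Real.exp (ε * n) * L x) := by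
              apply mul_le_mul_of_nonneg_left h2 (Real.exp_pos ε).le
          _ = Real.exp (ε * (n + 1)) * L x := by
              rw [← mul_assoc, ← Real.exp_add]
              ring_nf
  -- conclusion
  intro x hx l hl1
  have hl0 : (0:ℝ) < l := lt_of_lt_of_le one_pos hl1
  set n : ℕ := ⌈Real.log l⌉₊ with hn
  have hlen : l ≤ Real.exp n := by
    rw [← Real.exp_log hl0]
    exact Real.exp_le_exp.mpr (Nat.le_ceil _)
  have hnle : (n:ℝ) ≤ Real.log l + 1 := by
    have := Nat.ceil_lt_add_one (Real.log_nonneg hl1)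
    exact this.le
  calc L (l * x) ≤ Real.exp (ε * n) * L x := chain n l hl1 hlen x hx
    _ ≤ Real.exp ε * l ^ ε * L x := by
        have hLx : 0 < L x :=
          hLpos x (lt_of_lt_of_le one_pos (le_trans hX1 hx))
        have h1 : Real.exp (ε * n) ≤ Real.exp ε * l ^ ε := by
          rw [Real.rpow_def_of_pos hl0, ← Real.exp_add]
          apply Real.exp_le_exp.mpr
          nlinarith [Real.log_nonneg hl1]
        nlinarith

/-- **Lemma 1, part (4); Karamata's theorem.** Let `L : (0,∞) → (0,∞)` be a measurable slowly
varying function in Karamata's sense, locally integrable on `[A, ∞)` for some `A > 0`. Then for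
every `α < -1`, the function `t ↦ t^α * L t` is integrable on `[x, ∞)` for all sufficiently
large `x`, and `-(∫_x^∞ t^α L(t) dt) / (x^(α+1) L(x)) → 1/(α+1)` as `x → ∞`. -/
theorem karamata_upper
    (L : ℝ → ℝ) (hLmeas : Measurable L) (hLpos : ∀ x > 0, 0 < L x)
    (hLsv : ∀ c > 0, Tendsto (fun x => L (c * x) / L x) atTop (nhds 1))
    (A : ℝ) (hA : 0 < A) (hLint : LocallyIntegrableOn L (Set.Ici A)) :
    ∀ α < (-1 : ℝ),
      (∀ᶠ x in atTop, IntegrableOn (fun t : ℝ => t ^ α * L t) (Set.Ici x)) ∧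
      Tendsto (fun x : ℝ => -(∫ t in Set.Ici x, t ^ α * L t) / (x ^ (α + 1) * L x))
        atTop (nhds (1 / (α + 1))) := by
  intro α hα
  set ε : ℝ := (-1 - α) / 2 with hε
  have hε0 : 0 < ε := by rw [hε]; linarith
  have hαε : α + ε < -1 := by rw [hε]; linarith
  obtain ⟨X, hX1, hpot⟩ := karamata_potter L hLmeas hLpos hLsv ε hε0
  have hX0 : (0:ℝ) < X := lt_of_lt_of_le one_pos hX1
  -- measurability of the integrand
  have hfm : Measurable fun t : ℝ => t ^ α * L t := by
    have h1 : Measurable fun t : ℝ => t ^ α := by fun_prop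
    exact h1.mul hLmeas
  -- integrability for x ≥ X
  have hint : ∀ x ≥ X, IntegrableOn (fun t : ℝ => t ^ α * L t) (Set.Ici x) := by
    intro x hx
    have hx0 : (0:ℝ) < x := lt_of_lt_of_le hX0 hx
    rw [integrableOn_Ici_iff_integrableOn_Ioi]
    have hg : IntegrableOn
        (fun t : ℝ => (Real.exp ε * x ^ (-ε) * L x) * t ^ (α + ε)) (Ioi x) :=
      (integrableOn_Ioi_rpow_of_lt hαε hx0).const_mul _
    refine Integrable.mono' hg (hfm.aestronglyMeasurable) ?_
    filter_upwards [self_mem_ae_restrict measurableSet_Ioi] with t ht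
    have htx : x < t := ht
    have ht0 : (0:ℝ) < t := lt_trans hx0 htx
    have htpos : 0 < t ^ α * L t := mul_pos (Real.rpow_pos_of_pos ht0 α) (hLpos t ht0)
    rw [Real.norm_eq_abs, abs_of_pos htpos]
    have hdiv : (1:ℝ) ≤ t / x := (le_div_iff₀ hx0).mpr (by linarith)
    have hLt : L t ≤ Real.exp ε * (t / x) ^ ε * L x := by
      have := hpot x hx (t / x) hdiv
      rwa [div_mul_cancel₀ _ hx0.ne'] at this
    have hda : (t / x) ^ ε = t ^ ε * x ^ (-ε) := by
      rw [Real.div_rpow ht0.le hx0.le, Real.rpow_neg hx0.le, div_eq_mul_inv]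
    calc t ^ α * L t ≤ t ^ α * (Real.exp ε * (t / x) ^ ε * L x) := by
          apply mul_le_mul_of_nonneg_left hLt (Real.rpow_pos_of_pos ht0 α).le
      _ = (Real.exp ε * x ^ (-ε) * L x) * t ^ (α + ε) := by
          rw [hda, Real.rpow_add ht0]
          ring
  constructor
  · exact eventually_atTop.mpr ⟨X, hint⟩
  -- the limit
  have hIoi1 : IntegrableOn (fun s : ℝ => Real.exp ε * s ^ (α + ε)) (Ioi (1:ℝ)) :=
    (integrableOn_Ioi_rpow_of_lt hαε one_pos).const_mul _
  set I : ℝ → ℝ := fun x => ∫ s in Ioi (1:ℝ), s ^ α * (L (x * s) / L x) with hI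
  have hItend : Tendsto I atTop (nhds (∫ s in Ioi (1:ℝ), s ^ α)) := by
    refine tendsto_integral_filter_of_dominated_convergence
      (fun s => Real.exp ε * s ^ (α + ε)) ?_ ?_ hIoi1 ?_
    · filter_upwards with x
      have h1 : Measurable fun s : ℝ => s ^ α := by fun_prop
      exact ((h1.mul
        ((hLmeas.comp (measurable_const.mul measurable_id)).div measurable_const)).aestronglyMeasurable)
    · filter_upwards [eventually_ge_atTop X] with x hx
      filter_upwards [self_mem_ae_restrict measurableSet_Ioi] with s hs
      have hs1 : (1:ℝ) < s := hs
      have hs0 : (0:ℝ) < s := lt_trans one_pos hs1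
      have hx0 : (0:ℝ) < x := lt_of_lt_of_le hX0 hx
      have hLx : 0 < L x := hLpos x hx0
      have hLxs : 0 < L (x * s) := hLpos _ (by positivity)
      have hb : L (x * s) ≤ Real.exp ε * s ^ ε * L x := by
        have := hpot x hx s hs1.le
        rwa [mul_comm s x] at this
      have hpos : 0 < s ^ α * (L (x * s) / L x) :=
        mul_pos (Real.rpow_pos_of_pos hs0 α) (div_pos hLxs hLx)
      rw [Real.norm_eq_abs, abs_of_pos hpos]
      calc s ^ α * (L (x * s) / L x)
          ≤ s ^ α * (Real.exp ε * s ^ ε) := by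
            apply mul_le_mul_of_nonneg_left ?_ (Real.rpow_pos_of_pos hs0 α).le
            rw [div_le_iff₀ hLx]
            linarith [hb]
        _ = Real.exp ε * s ^ (α + ε) := by rw [Real.rpow_add hs0]; ring
    · filter_upwards [self_mem_ae_restrict measurableSet_Ioi] with s hs
      have hs0 : (0:ℝ) < s := lt_trans one_pos hs
      have h1 : Tendsto (fun x => L (x * s) / L x) atTop (nhds 1) :=
        (hLsv s hs0).congr (fun x => by rw [mul_comm])
      have := h1.const_mul (s ^ α)
      rw [mul_one] at this
      exact this
  have hval : (∫ s in Ioi (1:ℝ), s ^ α) = -(1 / (α + 1)) := by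
    rw [integral_Ioi_rpow_of_lt hα one_pos, Real.one_rpow]
    ring
  rw [hval] at hItend
  -- eventual equality of the two expressions
  have heq : (fun x : ℝ => -(∫ t in Set.Ici x, t ^ α * L t) / (x ^ (α + 1) * L x))
      =ᶠ[atTop] fun x => -(I x) := by
    filter_upwards [eventually_ge_atTop X] with x hx
    have hx0 : (0:ℝ) < x := lt_of_lt_of_le hX0 hx
    have hLx : 0 < L x := hLpos x hx0
    have e1 : (∫ t in Set.Ici x, t ^ α * L t) = ∫ t in Ioi x, t ^ α * L t :=
      integral_Ici_eq_integral_Ioi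
    have e2 : (∫ s in Ioi (1:ℝ), (x * s) ^ α * L (x * s))
        = x⁻¹ • ∫ t in Ioi x, t ^ α * L t := by
      have := integral_comp_mul_left_Ioi (fun t => t ^ α * L t) 1 hx0
      rwa [mul_one] at this
    have e3 : (∫ s in Ioi (1:ℝ), (x * s) ^ α * L (x * s))
        = (x ^ α * L x) * I x := by
      rw [hI, ← integral_const_mul]
      refine setIntegral_congr_fun measurableSet_Ioi (fun s hs => ?_)
      have hs0 : (0:ℝ) < s := lt_trans one_pos hs
      rw [Real.mul_rpow hx0.le hs0.le]
      field_simp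
    have e4 : (∫ t in Ioi x, t ^ α * L t) = x ^ (α + 1) * L x * I x := by
      have := e2.symm.trans e3
      rw [smul_eq_mul] at this
      have h5 : (∫ t in Ioi x, t ^ α * L t) = x * (x ^ α * L x * I x) := by
        field_simp at this ⊢
        linarith [this]
      rw [h5, Real.rpow_add_one hx0.ne']
      ring
    rw [e1, e4, neg_div]
    congr 1
    rw [mul_comm (x ^ (α + 1) * L x) (I x)]
    rw [mul_div_assoc, div_self (by positivity : x ^ (α + 1) * L x ≠ 0), mul_one]
  have : Tendsto (fun x => -(I x)) atTop (nhds (-(-(1 / (α + 1))))) := hItend.neg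
  rw [neg_neg] at this
  exact Tendsto.congr' heq.symm this
end

section
/- Let a > 0, let m ≥ 1 be an integer, and let L : (0,∞) → (0,∞) be measurable with 0 < ∫₀^∞ t^{−a−1} L(t) dt = 1/K < ∞. Then lim_{τ → 0⁺} τ^{2a} ∫₀¹ u^{a+m/2−1} (1−u)^{−a−1} L(τ^{−2}(u^{−1}−1)) du = 1/K. Equivalently, for any sequence τ_n → 0, ∫₀¹ u^{a+m/2−1}(1−u)^{−a−1} L(τ_n^{−2}(u^{−1}−1)) du = K^{−1} τ_n^{−2a} (1+o(1)). (Lemma 2.) -/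
open Filter MeasureTheory

lemma lemma2_image (τ : ℝ) (hτ : 0 < τ) :
    (fun t : ℝ => (1 + t * τ^2)⁻¹) '' Set.Ioi 0 = Set.Ioo 0 1 := by
  ext u
  constructor
  · rintro ⟨t, ht, rfl⟩
    have ht : (0:ℝ) < t := ht
    have h1 : (1:ℝ) < 1 + t * τ^2 := by nlinarith [mul_pos ht (pow_pos hτ 2)]
    exact ⟨by positivity, inv_lt_one_of_one_lt₀ h1⟩
  · rintro ⟨hu0, hu1⟩
    refine ⟨(u⁻¹ - 1) / τ^2, ?_, ?_⟩
    · have h2 : (1:ℝ) < u⁻¹ := (one_lt_inv₀ hu0).mpr hu1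
      have h3 : (0:ℝ) < u⁻¹ - 1 := by linarith
      show (0:ℝ) < (u⁻¹ - 1) / τ^2
      positivity
    · show (1 + (u⁻¹ - 1) / τ^2 * τ^2)⁻¹ = u
      rw [div_mul_cancel₀ _ (pow_ne_zero 2 hτ.ne'),
        show 1 + (u⁻¹ - 1) = u⁻¹ by ring, inv_inv]

lemma lemma2_change (a : ℝ) (m : ℕ) (L : ℝ → ℝ) (τ : ℝ) (hτ : 0 < τ) :
    τ ^ (2 * a) * ∫ u in (0:ℝ)..1,
        u ^ (a + (m : ℝ) / 2 - 1) * (1 - u) ^ (-a - 1) * L ((u⁻¹ - 1) / τ ^ 2)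
    = ∫ t in Set.Ioi (0:ℝ), (1 + t * τ^2) ^ (-(m:ℝ)/2) * (t ^ (-a - 1) * L t) := by
  rw [intervalIntegral.integral_of_le zero_le_one, MeasureTheory.integral_Ioc_eq_integral_Ioo, ← lemma2_image τ hτ]
  have hderiv : ∀ t ∈ Set.Ioi (0:ℝ),
      HasDerivWithinAt (fun t : ℝ => (1 + t * τ^2)⁻¹)
        ((-(τ^2)) / (1 + t * τ^2)^2) (Set.Ioi 0) t := by
    intro t ht
    have ht : (0:ℝ) < t := ht
    have hne : (1 + t * τ^2) ≠ 0 := by positivity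
    have h : HasDerivAt (fun t : ℝ => 1 + t * τ^2) (τ^2) t :=
      (hasDerivAt_mul_const (τ^2)).const_add 1
    exact (h.inv hne).hasDerivWithinAt
  have hinj : Set.InjOn (fun t : ℝ => (1 + t * τ^2)⁻¹) (Set.Ioi 0) := by
    intro s hs t ht h
    have := inv_injective h
    have hτ2 : τ^2 ≠ 0 := by positivity
    have h2 : s * τ^2 = t * τ^2 := by linarith
    exact mul_right_cancel₀ hτ2 h2
  rw [MeasureTheory.integral_image_eq_integral_abs_deriv_smul measurableSet_Ioi hderiv hinj,
    ← MeasureTheory.integral_const_mul]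
  refine MeasureTheory.setIntegral_congr_fun measurableSet_Ioi fun t ht => ?_
  have ht : (0:ℝ) < t := ht
  have hc : (0:ℝ) < 1 + t*τ^2 := by positivity
  have harg : (((1 + t * τ^2)⁻¹)⁻¹ - 1) / τ^2 = t := by field_simp; ring
  rw [smul_eq_mul, harg]
  have key : τ ^ (2*a) * (|(-(τ^2)) / (1+t*τ^2)^2| *
      (((1+t*τ^2)⁻¹) ^ (a + (m:ℝ)/2 - 1) * (1 - (1+t*τ^2)⁻¹) ^ (-a-1)))
      = (1+t*τ^2) ^ (-(m:ℝ)/2) * t ^ (-a-1) := by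
    have h1 : 1 - (1+t*τ^2)⁻¹ = t*τ^2 / (1+t*τ^2) := by field_simp; ring
    have habs : |(-(τ^2)) / (1+t*τ^2)^2| = τ^2 / (1+t*τ^2)^2 := by
      rw [abs_div, abs_neg, abs_of_pos (by positivity), abs_of_pos (by positivity)]
    rw [habs, h1]
    set c : ℝ := 1 + t*τ^2 with hcdef
    rw [Real.div_rpow (by positivity) hc.le,
      Real.mul_rpow ht.le (by positivity),
      Real.inv_rpow hc.le,
      ← Real.rpow_natCast c 2, ← Real.rpow_natCast τ 2,
      ← Real.rpow_mul hτ.le]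
    push_cast
    simp only [div_eq_mul_inv, Real.rpow_def_of_pos hc, Real.rpow_def_of_pos hτ,
      Real.rpow_def_of_pos ht, ← Real.exp_neg, ← Real.exp_add]
    rw [Real.exp_eq_exp]
    ring
  calc τ ^ (2*a) * (|(-(τ^2)) / (1 + t * τ^2)^2| *
        (((1 + t * τ^2)⁻¹) ^ (a + (m:ℝ)/2 - 1) * (1 - (1 + t * τ^2)⁻¹) ^ (-a-1) * L t))
      = (τ ^ (2*a) * (|(-(τ^2)) / (1+t*τ^2)^2| *
        (((1+t*τ^2)⁻¹) ^ (a + (m:ℝ)/2 - 1) * (1 - (1+t*τ^2)⁻¹) ^ (-a-1)))) * L t := by ring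
    _ = (1 + t * τ^2) ^ (-(m:ℝ)/2) * (t ^ (-a - 1) * L t) := by rw [key]; ring

/-- **Lemma 2.** Let `a > 0`, let `m ≥ 1` be an integer, and let `L : (0,∞) → (0,∞)` be measurable
with `0 < ∫₀^∞ t^(-a-1) L(t) dt = 1/K < ∞`. Then
`τ^(2a) ∫₀¹ u^(a+m/2-1) (1-u)^(-a-1) L(τ⁻²(u⁻¹-1)) du → 1/K` as `τ → 0⁺`. -/
theorem lemma2_integral_asymptotics
    (a : ℝ) (ha : 0 < a) (m : ℕ) (hm : 1 ≤ m)
    (L : ℝ → ℝ) (hLmeas : Measurable L) (hLpos : ∀ x > 0, 0 < L x)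
    (K : ℝ) (hK : 0 < K)
    (hLint : IntegrableOn (fun t : ℝ => t ^ (-a - 1) * L t) (Set.Ioi 0))
    (hKval : ∫ t in Set.Ioi (0 : ℝ), t ^ (-a - 1) * L t = 1 / K) :
    Tendsto
      (fun τ : ℝ => τ ^ (2 * a) *
        ∫ u in (0 : ℝ)..1,
          u ^ (a + (m : ℝ) / 2 - 1) * (1 - u) ^ (-a - 1) * L ((u⁻¹ - 1) / τ ^ 2))
      (nhdsWithin 0 (Set.Ioi 0)) (nhds (1 / K)) := by
  have hT : Tendsto
      (fun τ : ℝ => ∫ t in Set.Ioi (0:ℝ), (1 + t * τ^2) ^ (-(m:ℝ)/2) * (t ^ (-a - 1) * L t))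
      (nhdsWithin 0 (Set.Ioi 0)) (nhds (1 / K)) := by
    rw [← hKval]
    refine MeasureTheory.tendsto_integral_filter_of_dominated_convergence
      (fun t => t ^ (-a - 1) * L t) ?_ ?_ hLint ?_
    · filter_upwards with τ
      have hcont : ContinuousOn (fun t : ℝ => (1 + t * τ^2) ^ (-(m:ℝ)/2)) (Set.Ioi 0) := by
        apply ContinuousOn.rpow_const
          (Continuous.continuousOn (by continuity))
        intro x hx
        have hx : (0:ℝ) < x := hx
        exact Or.inl (by positivity)
      exact (hcont.aestronglyMeasurable measurableSet_Ioi).mul hLint.aestronglyMeasurable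
    · filter_upwards with τ
      rw [MeasureTheory.ae_restrict_iff' measurableSet_Ioi]
      filter_upwards with t ht
      have ht : (0:ℝ) < t := ht
      have hc : (0:ℝ) < 1 + t * τ^2 := by positivity
      have hL : (0:ℝ) ≤ L t := (hLpos t ht).le
      have hy : (0:ℝ) ≤ t ^ (-a-1) * L t := by positivity
      have hcle : (1 + t * τ^2) ^ (-(m:ℝ)/2) ≤ 1 := by
        apply Real.rpow_le_one_of_one_le_of_nonpos (by nlinarith [mul_nonneg ht.le (sq_nonneg τ)])
        have : (0:ℝ) ≤ (m:ℝ) := Nat.cast_nonneg m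
        linarith
      rw [Real.norm_eq_abs, abs_of_nonneg (by positivity)]
      calc (1 + t * τ^2) ^ (-(m:ℝ)/2) * (t ^ (-a-1) * L t)
          ≤ 1 * (t ^ (-a-1) * L t) := mul_le_mul_of_nonneg_right hcle hy
        _ = t ^ (-a-1) * L t := one_mul _
    · rw [MeasureTheory.ae_restrict_iff' measurableSet_Ioi]
      filter_upwards with t ht
      have h0 : Tendsto (fun τ : ℝ => 1 + t * τ^2) (nhdsWithin 0 (Set.Ioi 0)) (nhds 1) := by
        have : Tendsto (fun τ : ℝ => 1 + t * τ^2) (nhds 0) (nhds (1 + t * 0^2)) :=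
          (continuous_const.add (continuous_const.mul (continuous_pow 2))).tendsto 0
        simpa using this.mono_left nhdsWithin_le_nhds
      have h1 : Tendsto (fun τ : ℝ => (1 + t * τ^2) ^ (-(m:ℝ)/2))
          (nhdsWithin 0 (Set.Ioi 0)) (nhds 1) := by
        have := h0.rpow_const (p := -(m:ℝ)/2) (Or.inl one_ne_zero)
        simpa using this
      simpa using h1.mul_const (t ^ (-a-1) * L t)
  refine hT.congr' ?_
  filter_upwards [self_mem_nhdsWithin] with τ hτ
  exact (lemma2_change a m L τ hτ).symm
end

section
/- In the shrinkage prior setup with a ∈ (0,1) and L satisfying Assumption 1, there exist a constant A₀ ≥ 1 and a function ε : (0,1) → ℝ with ε(τ) → 0 as τ → 0⁺ such that for every τ ∈ (0,1) and every w ≥ 0, the posterior shrinkage weight satisfies R(τ, w) ≤ (A₀ K / (a(1−a))) · τ^{2a} L(τ^{−2}) · exp(w/2) · (1 + ε(τ)). (Lemma 3, case 0 < a < 1.) -/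
open Filter MeasureTheory

/-- Unnormalized posterior density of the shrinkage coefficient `κ ∈ (0,1)`:
`π(κ; τ, w) = κ^(a+m/2-1) (1-κ)^(-a-1) L(τ⁻²(κ⁻¹-1)) exp(-κw/2)`. -/
noncomputable def postDensity (a : ℝ) (m : ℕ) (L : ℝ → ℝ) (τ w κ : ℝ) : ℝ :=
  κ ^ (a + (m : ℝ) / 2 - 1) * (1 - κ) ^ (-a - 1) * L ((κ⁻¹ - 1) / τ ^ 2) *
    Real.exp (-(κ * w) / 2)

/-- Posterior shrinkage weight `R(τ, w) = E(1 - κ | τ, w)`. -/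
noncomputable def shrinkWeight (a : ℝ) (m : ℕ) (L : ℝ → ℝ) (τ w : ℝ) : ℝ :=
  (∫ κ in (0 : ℝ)..1, (1 - κ) * postDensity a m L τ w κ) /
    ∫ κ in (0 : ℝ)..1, postDensity a m L τ w κ

set_option maxHeartbeats 400000 in
/-- **Lemma 3, case `0 < a < 1`.** In the shrinkage prior setup with `a ∈ (0,1)` and `L` satisfying
Assumption 1, there exist a constant `A₀ ≥ 1` and a function `ε : (0,1) → ℝ` with `ε(τ) → 0` as
`τ → 0⁺` such that for every `τ ∈ (0,1)` and every `w ≥ 0`,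
`R(τ, w) ≤ (A₀ K / (a(1-a))) · τ^(2a) L(τ⁻²) · exp(w/2) · (1 + ε(τ))`. -/
theorem lemma3_shrinkWeight_upper_bound_lt_one
    (a : ℝ) (ha0 : 0 < a) (ha1 : a < 1) (m : ℕ) (hm : 1 ≤ m)
    (L : ℝ → ℝ) (hLmeas : Measurable L) (hLpos : ∀ x > 0, 0 < L x)
    (hLsv : ∀ c > 0, Tendsto (fun x => L (c * x) / L x) atTop (nhds 1))
    (c₀ t₀ : ℝ) (hc₀ : 0 < c₀) (ht₀ : 0 < t₀) (hLlow : ∀ t ≥ t₀, c₀ ≤ L t)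
    (M : ℝ) (hLup : ∀ t > 0, L t ≤ M)
    (K : ℝ) (hK : 0 < K)
    (hLint : IntegrableOn (fun t : ℝ => t ^ (-a - 1) * L t) (Set.Ioi 0))
    (hKval : ∫ t in Set.Ioi (0 : ℝ), t ^ (-a - 1) * L t = 1 / K) :
    ∃ A₀ : ℝ, 1 ≤ A₀ ∧ ∃ ε : ℝ → ℝ,
      Tendsto ε (nhdsWithin 0 (Set.Ioi 0)) (nhds 0) ∧
      ∀ τ ∈ Set.Ioo (0 : ℝ) 1, ∀ w ≥ (0 : ℝ),
        shrinkWeight a m L τ w ≤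
          A₀ * K / (a * (1 - a)) * (τ ^ (2 * a) * L (1 / τ ^ 2)) * Real.exp (w / 2) *
            (1 + ε τ) := by
  have hM0 : 0 < M := lt_of_lt_of_le (hLpos t₀ ht₀) (hLup t₀ ht₀)
  have ha1' : (0:ℝ) < 1 - a := by linarith
  have hpge : a - 1/2 ≤ a + (m : ℝ) / 2 - 1 := by
    have h1 : (1:ℝ) ≤ (m:ℝ) := by exact_mod_cast hm
    linarith
  set P : ℝ := a + (m : ℝ) / 2 - 1 with hP
  set cm : ℝ := (1/2 : ℝ) ^ |P| with hcm
  have hcm0 : 0 < cm := Real.rpow_pos_of_pos (by norm_num) _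
  have hcm1 : cm ≤ 1 := Real.rpow_le_one (by norm_num) (by norm_num) (abs_nonneg P)
  set Nb : ℝ := M * (4 + 2/(1-a)) with hNb
  have hNb0 : 0 < Nb :=
    mul_pos hM0 (by positivity)
  have ht₀a : (0:ℝ) < t₀ ^ a := Real.rpow_pos_of_pos ht₀ _
  set C : ℝ := 2*a*Nb*t₀^a/(cm*c₀) with hC
  have hC0 : 0 < C := by
    apply div_pos
    · positivity
    · positivity
  set A₀ : ℝ := max 1 (C * (a*(1-a)) / (K*c₀)) with hA₀
  have hA₀1 : (1:ℝ) ≤ A₀ := le_max_left _ _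
  have hA₀0 : (0:ℝ) < A₀ := lt_of_lt_of_le one_pos hA₀1
  set C₁ : ℝ := A₀ * K / (a*(1-a)) with hC₁
  have hC₁0 : 0 < C₁ := by
    apply div_pos (mul_pos hA₀0 hK) (mul_pos ha0 ha1')
  have hCC₁ : C ≤ C₁ * c₀ := by
    have h2 : C * (a*(1-a)) / (K*c₀) ≤ A₀ := le_max_right _ _
    rw [div_le_iff₀ (by positivity)] at h2
    rw [hC₁, div_mul_eq_mul_div, le_div_iff₀ (by positivity)]
    nlinarith [mul_pos hK hc₀]
  set q : ℝ := (2:ℝ) ^ (-(a+1)/a) with hq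
  have hq0 : 0 < q := Real.rpow_pos_of_pos (by norm_num) _
  have hq1 : q < 1 := by
    apply Real.rpow_lt_one_of_one_lt_of_neg (by norm_num)
    have h : 0 < (a+1)/a := by positivity
    rw [neg_div]
    linarith
  have hqa : q ^ (-a) = 2 ^ (a+1) := by
    rw [hq, ← Real.rpow_mul (by norm_num : (0:ℝ) ≤ 2)]
    congr 1
    have e : -(a+1)/a * -a = ((a+1)/a) * a := by ring
    rw [e, div_mul_cancel₀ _ ha0.ne']
  set δ : ℝ := min (1/2) (Real.sqrt (q / t₀)) with hδ
  have hδ0 : 0 < δ := lt_min (by norm_num) (Real.sqrt_pos.mpr (by positivity))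
  set ε : ℝ → ℝ := fun τ => if τ < δ then 0 else 1/(C₁*(τ^(2*a)*L (1/τ^2))) with hε
  have hδle : δ ≤ Real.sqrt (q / t₀) := by rw [hδ]; exact min_le_right _ _
  have hεeq : ∀ t : ℝ, ε t = if t < δ then 0 else 1/(C₁*(t^(2*a)*L (1/t^2))) :=
    fun t => by rw [hε]
  clear_value P cm Nb C A₀ C₁ q δ ε
  refine ⟨A₀, hA₀1, ε, ?_, ?_⟩
  · -- tendsto
    have hev : ∀ᶠ τ in nhdsWithin 0 (Set.Ioi 0), (fun _ : ℝ => (0:ℝ)) τ = ε τ := by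
      filter_upwards [Ioo_mem_nhdsGT_of_mem (Set.mem_Ico.mpr ⟨le_refl (0:ℝ), hδ0⟩)] with τ hτ
      rw [hεeq τ, if_pos hτ.2]
    exact Tendsto.congr' hev tendsto_const_nhds
  · rintro τ ⟨hτ0, hτ1⟩ w hw
    have hτ2 : (0:ℝ) < τ^2 := by positivity
    have hLτ2pos : 0 < L (1/τ^2) := hLpos _ (by positivity)
    have hX0 : 0 < τ^(2*a) * L (1/τ^2) :=
      mul_pos (Real.rpow_pos_of_pos hτ0 _) hLτ2pos
    have hεnn : 0 ≤ ε τ := by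
      rw [hεeq τ]
      by_cases h : τ < δ
      · rw [if_pos h]
      · rw [if_neg h]
        positivity
    have hRHSnn : 0 ≤ A₀ * K / (a * (1 - a)) * (τ ^ (2 * a) * L (1 / τ ^ 2)) *
        Real.exp (w / 2) * (1 + ε τ) := by
      have := hX0.le
      have := (Real.exp_pos (w/2)).le
      positivity
    -- density facts
    have hfapp : ∀ κ : ℝ, postDensity a m L τ w κ =
        κ ^ P * (1 - κ) ^ (-a - 1) * L ((κ⁻¹ - 1) / τ ^ 2) * Real.exp (-(κ * w) / 2) := by
      intro κ; rw [hP]; rfl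
    have hargpos : ∀ κ : ℝ, 0 < κ → κ < 1 → 0 < (κ⁻¹ - 1) / τ ^ 2 := by
      intro κ h0 h1
      have : 1 < κ⁻¹ := by
        rw [show (1:ℝ) = (1:ℝ)⁻¹ by norm_num]
        exact inv_strictAnti₀ h0 (by simpa using h1)
      apply div_pos (by linarith) hτ2
    have hfpos : ∀ κ ∈ Set.Ioo (0:ℝ) 1, 0 < postDensity a m L τ w κ := by
      rintro κ ⟨h0, h1⟩
      rw [hfapp]
      have := hLpos _ (hargpos κ h0 h1)
      have h2 : (0:ℝ) < κ ^ P := Real.rpow_pos_of_pos h0 _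
      have h3 : (0:ℝ) < (1-κ) ^ (-a-1) := Real.rpow_pos_of_pos (by linarith) _
      positivity
    have hf1 : postDensity a m L τ w 1 = 0 := by
      rw [hfapp]
      rw [show (1:ℝ) - 1 = 0 by ring, Real.zero_rpow (by intro h; linarith [h] : -a-1 ≠ 0)]
      ring
    have hfnn : ∀ κ ∈ Set.Ioc (0:ℝ) 1, 0 ≤ postDensity a m L τ w κ := by
      rintro κ ⟨h0, h1⟩
      rcases lt_or_eq_of_le h1 with h | h
      · exact (hfpos κ ⟨h0, h⟩).le
      · rw [h, hf1]
    have hfmeas : Measurable (postDensity a m L τ w) := by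
      have h1 : Measurable fun κ : ℝ => κ ^ (a + (m:ℝ)/2 - 1) := by fun_prop
      have h2 : Measurable fun κ : ℝ => (1 - κ) ^ (-a - 1) := by fun_prop
      have h3 : Measurable fun κ : ℝ => L ((κ⁻¹ - 1) / τ ^ 2) := by fun_prop
      have h4 : Measurable fun κ : ℝ => Real.exp (-(κ * w) / 2) := by fun_prop
      exact ((h1.mul h2).mul h3).mul h4
    by_cases hint : IntegrableOn (postDensity a m L τ w) (Set.Ioc 0 1) volume
    swap
    · -- non-integrable: denominator is 0
      have hD : (∫ κ in (0:ℝ)..1, postDensity a m L τ w κ) = 0 := by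
        rw [intervalIntegral.integral_of_le zero_le_one]
        exact integral_undef hint
      simp only [shrinkWeight]
      rw [hD, div_zero]
      exact hRHSnn
    -- integrable case
    have hNint : IntegrableOn (fun κ => (1-κ) * postDensity a m L τ w κ) (Set.Ioc 0 1) volume := by
      apply MeasureTheory.Integrable.mono hint
        ((measurable_const.sub measurable_id).mul hfmeas).aestronglyMeasurable
      rw [ae_restrict_iff' measurableSet_Ioc]
      apply ae_of_all
      rintro κ ⟨h0, h1⟩
      rw [Real.norm_eq_abs, Real.norm_eq_abs]
      show |(1 - κ) * postDensity a m L τ w κ| ≤ _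
      rw [abs_mul]
      have h2 : |1 - κ| ≤ 1 := abs_le.mpr ⟨by linarith, by linarith⟩
      exact mul_le_of_le_one_left (abs_nonneg _) h2
    have hD0 : 0 < ∫ κ in (0:ℝ)..1, postDensity a m L τ w κ :=
      intervalIntegral.intervalIntegral_pos_of_pos_on
        ((intervalIntegrable_iff_integrableOn_Ioc_of_le zero_le_one).mpr hint) hfpos one_pos
    have hN0 : 0 ≤ ∫ κ in (0:ℝ)..1, (1-κ) * postDensity a m L τ w κ := by
      rw [intervalIntegral.integral_of_le zero_le_one]
      exact setIntegral_nonneg measurableSet_Ioc fun κ hκ =>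
        mul_nonneg (by linarith [hκ.2]) (hfnn κ hκ)
    by_cases hτδ : τ < δ
    swap
    · -- τ ≥ δ: use shrinkWeight ≤ 1
      have hND : (∫ κ in (0:ℝ)..1, (1-κ) * postDensity a m L τ w κ) ≤
          ∫ κ in (0:ℝ)..1, postDensity a m L τ w κ := by
        rw [intervalIntegral.integral_of_le zero_le_one,
          intervalIntegral.integral_of_le zero_le_one]
        apply setIntegral_mono_on hNint hint measurableSet_Ioc
        rintro κ ⟨h0, h1⟩
        exact mul_le_of_le_one_left (hfnn κ ⟨h0, h1⟩) (by linarith)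
      have hR1 : shrinkWeight a m L τ w ≤ 1 := by
        simp only [shrinkWeight]
        rw [div_le_one hD0]
        exact hND
      have hετ : ε τ = 1/(C₁*(τ^(2*a)*L (1/τ^2))) := by rw [hεeq τ, if_neg hτδ]
      refine hR1.trans ?_
      rw [← hC₁, hετ]
      have hE1 : 1 ≤ Real.exp (w/2) := Real.one_le_exp (by positivity)
      have hkey : C₁ * (τ ^ (2*a) * L (1/τ^2)) * Real.exp (w/2) *
          (1 + 1/(C₁*(τ^(2*a) * L (1/τ^2)))) =
          C₁ * (τ ^ (2*a) * L (1/τ^2)) * Real.exp (w/2) + Real.exp (w/2) := by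
        field_simp
      rw [hkey]
      linarith [(mul_pos (mul_pos hC₁0 hX0) (Real.exp_pos (w/2))), hE1]
    · -- main case: τ < δ
      have hετ : ε τ = 0 := by rw [hεeq τ, if_pos hτδ]
      have hτδ2 : τ^2 < q / t₀ := by
        have h1 : τ < Real.sqrt (q/t₀) := lt_of_lt_of_le hτδ hδle
        exact (Real.lt_sqrt hτ0.le).mp h1
      have hT1 : t₀ * τ^2 < q := by
        rw [lt_div_iff₀ ht₀] at hτδ2
        linarith
      set T : ℝ := t₀ * τ^2 with hTdef
      have hT0 : 0 < T := by rw [hTdef]; positivity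
      clear_value T
      have hTq : T < q := hT1
      have hTlt1 : T < 1 := lt_trans hTq hq1
      have ht₀τ : t₀ ≤ 1/τ^2 := by
        rw [le_div_iff₀ hτ2]
        linarith
      have hLlow2 : c₀ ≤ L (1/τ^2) := hLlow _ ht₀τ
      -- Numerator bound
      have h2a : ((1:ℝ)/2) ^ (-a) = 2 ^ a := by
        rw [one_div, Real.inv_rpow (by norm_num : (0:ℝ) ≤ 2), ← Real.rpow_neg (by norm_num), neg_neg]
      have h2a2 : ((2:ℝ)) ^ a ≤ 2 := by
        calc (2:ℝ)^a ≤ 2^(1:ℝ) :=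
              Real.rpow_le_rpow_of_exponent_le one_le_two ha1.le
          _ = 2 := Real.rpow_one 2
      have hptw : ∀ κ ∈ Set.Ioc (0:ℝ) 1, (1-κ) * postDensity a m L τ w κ ≤
          2*M*κ^(-(1:ℝ)/2) + 2*M*(1-κ)^(-a) := by
        rintro κ ⟨h0, h1⟩
        rcases lt_or_eq_of_le h1 with hlt | heq
        · have h1κ : (0:ℝ) < 1 - κ := by linarith
          have step1 : (1-κ) * postDensity a m L τ w κ =
              κ ^ P * (1-κ)^(-a) * (L ((κ⁻¹ - 1) / τ ^ 2) * Real.exp (-(κ * w) / 2)) := by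
            rw [hfapp]
            have : (1-κ) * (1-κ)^(-a-1) = (1-κ)^(-a) := by
              nth_rewrite 1 [← Real.rpow_one (1-κ)]
              rw [← Real.rpow_add h1κ]
              congr 1
              ring
            calc (1-κ) * (κ ^ P * (1 - κ) ^ (-a - 1) * L ((κ⁻¹ - 1) / τ ^ 2) *
                  Real.exp (-(κ * w) / 2))
                = ((1-κ) * (1-κ)^(-a-1)) * κ ^ P * (L ((κ⁻¹ - 1) / τ ^ 2) *
                  Real.exp (-(κ * w) / 2)) := by ring
              _ = κ ^ P * (1-κ)^(-a) * (L ((κ⁻¹ - 1) / τ ^ 2) *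
                  Real.exp (-(κ * w) / 2)) := by rw [this]; ring
          have hLM : L ((κ⁻¹ - 1) / τ ^ 2) * Real.exp (-(κ * w) / 2) ≤ M := by
            have hL := hLup _ (hargpos κ h0 hlt)
            have hLnn := (hLpos _ (hargpos κ h0 hlt)).le
            have hE : Real.exp (-(κ * w) / 2) ≤ 1 := by
              rw [Real.exp_le_one_iff]
              have := mul_nonneg h0.le hw
              linarith
            exact (mul_le_of_le_one_right hLnn hE).trans hL
          have hκP : κ ^ P ≤ κ ^ (a - 1/2) :=
            Real.rpow_le_rpow_of_exponent_ge h0 h1 hpge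
          have step2 : (1-κ) * postDensity a m L τ w κ ≤ κ ^ (a-1/2) * (1-κ)^(-a) * M := by
            rw [step1]
            have hκPnn : (0:ℝ) ≤ κ ^ P := (Real.rpow_pos_of_pos h0 _).le
            have h1κa : (0:ℝ) ≤ (1-κ)^(-a) := (Real.rpow_pos_of_pos h1κ _).le
            have hLEnn : 0 ≤ L ((κ⁻¹ - 1) / τ ^ 2) * Real.exp (-(κ * w) / 2) :=
              mul_nonneg (hLpos _ (hargpos κ h0 hlt)).le (Real.exp_pos _).le
            calc κ ^ P * (1-κ)^(-a) * (L ((κ⁻¹ - 1) / τ ^ 2) * Real.exp (-(κ * w) / 2))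
                ≤ κ ^ P * (1-κ)^(-a) * M :=
                  mul_le_mul_of_nonneg_left hLM (by positivity)
              _ ≤ κ ^ (a-1/2) * (1-κ)^(-a) * M := by
                  apply mul_le_mul_of_nonneg_right _ hM0.le
                  exact mul_le_mul_of_nonneg_right hκP h1κa
          refine step2.trans ?_
          rcases le_or_gt κ (1/2) with hhalf | hhalf
          · -- κ ≤ 1/2 : bound by first term
            have hb1 : κ ^ (a-1/2) ≤ κ ^ (-(1:ℝ)/2) :=
              Real.rpow_le_rpow_of_exponent_ge h0 h1 (by linarith)
            have hb2 : (1-κ)^(-a) ≤ 2 := by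
              calc (1-κ)^(-a) ≤ ((1:ℝ)/2)^(-a) :=
                    Real.rpow_le_rpow_of_nonpos (by norm_num) (by linarith) (by linarith)
                _ = 2^a := h2a
                _ ≤ 2 := h2a2
            have hpos1 : (0:ℝ) ≤ κ ^ (-(1:ℝ)/2) := (Real.rpow_pos_of_pos h0 _).le
            have hpos2 : (0:ℝ) ≤ (1-κ)^(-a) := (Real.rpow_pos_of_pos h1κ _).le
            have hpos3 : (0:ℝ) ≤ κ ^ (a-1/2) := (Real.rpow_pos_of_pos h0 _).le
            have key : κ^(a-1/2) * ((1-κ)^(-a)) ≤ κ^(-(1:ℝ)/2) * 2 :=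
              mul_le_mul hb1 hb2 hpos2 hpos1
            calc κ ^ (a-1/2) * (1-κ)^(-a) * M ≤ (κ^(-(1:ℝ)/2) * 2) * M :=
                  mul_le_mul_of_nonneg_right key hM0.le
              _ = 2*M*κ^(-(1:ℝ)/2) := by ring
              _ ≤ 2*M*κ^(-(1:ℝ)/2) + 2*M*(1-κ)^(-a) :=
                  le_add_of_nonneg_right (by positivity)
          · -- κ > 1/2 : bound by second term
            have hb1 : κ ^ (a-1/2) ≤ 2 := by
              calc κ ^ (a-1/2) ≤ κ ^ (-(1:ℝ)/2) :=
                    Real.rpow_le_rpow_of_exponent_ge h0 h1 (by linarith)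
                _ ≤ ((1:ℝ)/2) ^ (-(1:ℝ)/2) :=
                    Real.rpow_le_rpow_of_nonpos (by norm_num) hhalf.le (by norm_num)
                _ = 2 ^ ((1:ℝ)/2) := by
                    rw [one_div, Real.inv_rpow (by norm_num : (0:ℝ) ≤ 2),
                      ← Real.rpow_neg (by norm_num)]
                    norm_num
                _ ≤ 2 ^ (1:ℝ) := Real.rpow_le_rpow_of_exponent_le one_le_two (by norm_num)
                _ = 2 := Real.rpow_one 2
            have hpos1 : (0:ℝ) ≤ κ ^ (-(1:ℝ)/2) := (Real.rpow_pos_of_pos h0 _).le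
            have hpos2 : (0:ℝ) ≤ (1-κ)^(-a) := (Real.rpow_pos_of_pos h1κ _).le
            calc κ ^ (a-1/2) * (1-κ)^(-a) * M ≤ (2 * ((1-κ)^(-a))) * M :=
                  mul_le_mul_of_nonneg_right (mul_le_mul_of_nonneg_right hb1 hpos2) hM0.le
              _ = 2*M*(1-κ)^(-a) := by ring
              _ ≤ 2*M*κ^(-(1:ℝ)/2) + 2*M*(1-κ)^(-a) :=
                  le_add_of_nonneg_left (by positivity)
        · -- κ = 1
          subst heq
          rw [sub_self, zero_mul]
          exact add_nonneg
            (mul_nonneg (by linarith) (Real.rpow_nonneg (by norm_num) _))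
            (mul_nonneg (by linarith) (Real.rpow_nonneg (by norm_num) _))
      have hg1int : IntegrableOn (fun κ : ℝ => κ^(-(1:ℝ)/2)) (Set.Ioc 0 1) volume :=
        (intervalIntegrable_iff_integrableOn_Ioc_of_le zero_le_one).mp
          (intervalIntegral.intervalIntegrable_rpow' (by norm_num))
      have hg2int : IntegrableOn (fun κ : ℝ => (1-κ)^(-a)) (Set.Ioc 0 1) volume := by
        apply (intervalIntegrable_iff_integrableOn_Ioc_of_le zero_le_one).mp
        have h := (intervalIntegral.intervalIntegrable_rpow'
          (show (-1:ℝ) < -a by linarith) (a := 0) (b := 1)).comp_sub_left 1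
        norm_num at h
        exact h.symm
      have hgint : IntegrableOn (fun κ : ℝ => 2*M*κ^(-(1:ℝ)/2) + 2*M*(1-κ)^(-a))
          (Set.Ioc 0 1) volume :=
        ((hg1int.const_mul (2*M)).add (hg2int.const_mul (2*M)))
      have hg1val : ∫ κ in (0:ℝ)..1, κ^(-(1:ℝ)/2) = 2 := by
        rw [integral_rpow (Or.inl (by norm_num))]
        norm_num
      have hg2val : ∫ κ in (0:ℝ)..1, (1-κ)^(-a) = 1/(1-a) := by
        have h := intervalIntegral.integral_comp_sub_left (a := 0) (b := 1)
          (fun u : ℝ => u^(-a)) 1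
        simp only [sub_zero, sub_self] at h
        rw [show (fun κ : ℝ => (1-κ)^(-a)) = fun κ : ℝ => ((1:ℝ)-κ)^(-a) from rfl]
        rw [h, integral_rpow (Or.inl (by linarith))]
        rw [Real.zero_rpow (by linarith), Real.one_rpow]
        ring
      have hgval : ∫ κ in Set.Ioc (0:ℝ) 1, (2*M*κ^(-(1:ℝ)/2) + 2*M*(1-κ)^(-a)) = Nb := by
        rw [← intervalIntegral.integral_of_le zero_le_one]
        rw [intervalIntegral.integral_add
          (((intervalIntegrable_iff_integrableOn_Ioc_of_le zero_le_one).mpr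
            (hg1int.const_mul (2*M))))
          (((intervalIntegrable_iff_integrableOn_Ioc_of_le zero_le_one).mpr
            (hg2int.const_mul (2*M))))]
        rw [intervalIntegral.integral_const_mul, intervalIntegral.integral_const_mul,
          hg1val, hg2val, hNb]
        ring
      have hNle : (∫ κ in (0:ℝ)..1, (1-κ) * postDensity a m L τ w κ) ≤ Nb := by
        rw [intervalIntegral.integral_of_le zero_le_one, ← hgval]
        exact setIntegral_mono_on hNint hgint measurableSet_Ioc hptw
      -- Denominator lower bound
      set β : ℝ := (1 + T)⁻¹ with hβ
      have hβpos : 0 < β := by rw [hβ]; positivity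
      clear_value β
      have hβlt1 : β < 1 := by
        rw [hβ, inv_lt_one_iff₀]
        right; linarith
      have hhalfβ : (1:ℝ)/2 < β := by
        rw [hβ]
        rw [lt_inv_comm₀ (by norm_num) (by positivity)]
        simp only [one_div, inv_inv]
        linarith
      have h1β : 1 - β = T / (1+T) := by
        rw [hβ]; field_simp; ring
      have h1βpos : 0 < 1 - β := by linarith
      have h1βleT : 1 - β ≤ T := by
        rw [h1β, div_le_iff₀ (by linarith)]
        have h6 := mul_le_mul_of_nonneg_left (show (1:ℝ) ≤ 1+T by linarith) hT0.le
        rw [mul_one] at h6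
        exact h6
      -- pointwise lower bound on Ioc (1/2) β
      have hlowpt : ∀ κ ∈ Set.Ioc (1/2:ℝ) β,
          cm * c₀ * Real.exp (-(w/2)) * (1-κ)^(-a-1) ≤ postDensity a m L τ w κ := by
        rintro κ ⟨hκl, hκr⟩
        have h0 : (0:ℝ) < κ := by linarith
        have h1 : κ < 1 := lt_of_le_of_lt hκr hβlt1
        have h1κ : (0:ℝ) < 1 - κ := by linarith
        rw [hfapp]
        have hcmκ : cm ≤ κ ^ P := by
          rcases le_or_gt 0 P with hPp | hPp
          · have : ((1:ℝ)/2) ^ P ≤ κ ^ P :=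
              Real.rpow_le_rpow (by norm_num) (by linarith) hPp
            calc cm = (1/2:ℝ) ^ |P| := hcm
              _ = (1/2:ℝ) ^ P := by rw [abs_of_nonneg hPp]
              _ ≤ κ ^ P := this
          · calc cm ≤ 1 := hcm1
              _ ≤ κ ^ P :=
                Real.one_le_rpow_of_pos_of_le_one_of_nonpos h0 h1.le hPp.le
        have hLc : c₀ ≤ L ((κ⁻¹ - 1) / τ ^ 2) := by
          apply hLlow
          have hκβ : κ ≤ β := hκr
          have hinv : (1:ℝ) + T ≤ κ⁻¹ := by
            rw [hβ] at hκβ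
            calc (1:ℝ) + T = ((1+T)⁻¹)⁻¹ := by rw [inv_inv]
              _ ≤ κ⁻¹ := by
                  apply inv_anti₀ h0 hκβ
          rw [ge_iff_le, le_div_iff₀ hτ2]
          rw [hTdef] at hinv
          linarith
        have hEc : Real.exp (-(w/2)) ≤ Real.exp (-(κ * w) / 2) := by
          apply Real.exp_le_exp.mpr
          have h2 : κ * w ≤ w := mul_le_of_le_one_left hw h1.le
          linarith
        have h1κa : (0:ℝ) < (1-κ)^(-a-1) := Real.rpow_pos_of_pos h1κ _
        calc cm * c₀ * Real.exp (-(w/2)) * (1-κ)^(-a-1)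
            = cm * (1-κ)^(-a-1) * c₀ * Real.exp (-(w/2)) := by ring
          _ ≤ κ ^ P * (1-κ)^(-a-1) * L ((κ⁻¹ - 1) / τ ^ 2) * Real.exp (-(κ * w) / 2) := by
              apply mul_le_mul
              · apply mul_le_mul
                · exact mul_le_mul_of_nonneg_right hcmκ h1κa.le
                · exact hLc
                · exact hc₀.le
                · positivity
              · exact hEc
              · exact (Real.exp_pos _).le
              · have hκP : (0:ℝ) < κ ^ P := Real.rpow_pos_of_pos h0 _
                have hLp : (0:ℝ) < L ((κ⁻¹ - 1) / τ ^ 2) := lt_of_lt_of_le hc₀ hLc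
                positivity
      have hlowint : IntegrableOn (fun κ : ℝ => cm * c₀ * Real.exp (-(w/2)) * (1-κ)^(-a-1))
          (Set.Ioc (1/2:ℝ) β) volume := by
        apply MeasureTheory.Integrable.const_mul
        apply (intervalIntegrable_iff_integrableOn_Ioc_of_le hhalfβ.le).mp
        apply ContinuousOn.intervalIntegrable
        apply ContinuousOn.rpow_const (by fun_prop)
        intro x hx
        left
        rw [Set.uIcc_of_le hhalfβ.le] at hx
        have : x ≤ β := hx.2
        have : (0:ℝ) < 1 - x := by linarith [hβlt1]
        linarith
      have hJval : ∫ κ in (1/2:ℝ)..β, (1-κ)^(-a-1) =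
          ((1-β)^(-a) - (1/2:ℝ)^(-a))/a := by
        have h := intervalIntegral.integral_comp_sub_left (a := (1/2:ℝ)) (b := β)
          (fun u : ℝ => u^(-a-1)) 1
        rw [show (fun κ : ℝ => (1-κ)^(-a-1)) = fun κ : ℝ => ((1:ℝ)-κ)^(-a-1) from rfl]
        rw [h]
        rw [integral_rpow (r := -a - 1) (Or.inr ⟨by intro hc; apply ha0.ne'; linarith [hc],
          Set.notMem_uIcc_of_lt h1βpos (by norm_num : (0:ℝ) < 1 - 1/2)⟩)]
        have e1 : -a - 1 + 1 = -a := by ring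
        rw [e1]
        have e2 : (1:ℝ) - 1/2 = 1/2 := by norm_num
        rw [e2, div_neg, ← neg_div, neg_sub]
      have hTa : (2:ℝ)^(a+1) ≤ T ^ (-a) := by
        rw [← hqa]
        exact Real.rpow_le_rpow_of_nonpos hT0 hTq.le (by linarith)
      have h1βa : T ^ (-a) ≤ (1-β)^(-a) :=
        Real.rpow_le_rpow_of_nonpos h1βpos h1βleT (by linarith)
      have h2aT : ((1:ℝ)/2)^(-a) ≤ T^(-a)/2 := by
        rw [h2a]
        rw [le_div_iff₀ (by norm_num : (0:ℝ) < 2)]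
        calc (2:ℝ)^a * 2 = 2^(a+1) := by
              rw [Real.rpow_add (by norm_num : (0:ℝ) < 2), Real.rpow_one]
          _ ≤ T^(-a) := hTa
      have hJge : T^(-a)/(2*a) ≤ ∫ κ in (1/2:ℝ)..β, (1-κ)^(-a-1) := by
        rw [hJval]
        rw [div_le_div_iff₀ (by positivity) ha0]
        have h5 : T^(-a)/2 ≤ (1-β)^(-a) - (1/2:ℝ)^(-a) := by linarith
        calc T^(-a) * a = (T^(-a)/2) * (2*a) := by ring
          _ ≤ ((1-β)^(-a) - (1/2:ℝ)^(-a)) * (2*a) :=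
              mul_le_mul_of_nonneg_right h5 (by linarith)
      have hDge : cm * c₀ * Real.exp (-(w/2)) * (T^(-a)/(2*a)) ≤
          ∫ κ in (0:ℝ)..1, postDensity a m L τ w κ := by
        have hsub : Set.Ioc (1/2:ℝ) β ⊆ Set.Ioc (0:ℝ) 1 :=
          Set.Ioc_subset_Ioc (by norm_num) hβlt1.le
        have hs1 : ∫ κ in Set.Ioc (1/2:ℝ) β, postDensity a m L τ w κ ≤
            ∫ κ in Set.Ioc (0:ℝ) 1, postDensity a m L τ w κ := by
          apply setIntegral_mono_set hint
          · rw [Filter.EventuallyLE]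
            rw [ae_restrict_iff' measurableSet_Ioc]
            exact ae_of_all _ fun κ hκ => hfnn κ hκ
          · exact HasSubset.Subset.eventuallyLE hsub
        have hs2 : ∫ κ in Set.Ioc (1/2:ℝ) β, (cm * c₀ * Real.exp (-(w/2)) * (1-κ)^(-a-1)) ≤
            ∫ κ in Set.Ioc (1/2:ℝ) β, postDensity a m L τ w κ :=
          setIntegral_mono_on hlowint (hint.mono_set hsub) measurableSet_Ioc hlowpt
        have hs3 : ∫ κ in Set.Ioc (1/2:ℝ) β, (cm * c₀ * Real.exp (-(w/2)) * (1-κ)^(-a-1)) =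
            cm * c₀ * Real.exp (-(w/2)) * ∫ κ in (1/2:ℝ)..β, (1-κ)^(-a-1) := by
          rw [← intervalIntegral.integral_of_le hhalfβ.le,
            intervalIntegral.integral_const_mul]
        have hs4 : cm * c₀ * Real.exp (-(w/2)) * (T^(-a)/(2*a)) ≤
            cm * c₀ * Real.exp (-(w/2)) * ∫ κ in (1/2:ℝ)..β, (1-κ)^(-a-1) :=
          mul_le_mul_of_nonneg_left hJge (by positivity)
        calc cm * c₀ * Real.exp (-(w/2)) * (T^(-a)/(2*a))
            ≤ cm * c₀ * Real.exp (-(w/2)) * ∫ κ in (1/2:ℝ)..β, (1-κ)^(-a-1) := hs4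
          _ = ∫ κ in Set.Ioc (1/2:ℝ) β, (cm * c₀ * Real.exp (-(w/2)) * (1-κ)^(-a-1)) :=
              hs3.symm
          _ ≤ ∫ κ in Set.Ioc (1/2:ℝ) β, postDensity a m L τ w κ := hs2
          _ ≤ ∫ κ in Set.Ioc (0:ℝ) 1, postDensity a m L τ w κ := hs1
          _ = ∫ κ in (0:ℝ)..1, postDensity a m L τ w κ :=
              (intervalIntegral.integral_of_le zero_le_one).symm
      set Dlow : ℝ := cm * c₀ * Real.exp (-(w/2)) * (T^(-a)/(2*a)) with hDlow
      clear_value Dlow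
      have hDlow0 : 0 < Dlow := by
        rw [hDlow]
        have : (0:ℝ) < T^(-a) := Real.rpow_pos_of_pos hT0 _
        positivity
      have hRle : shrinkWeight a m L τ w ≤ Nb / Dlow := by
        simp only [shrinkWeight]
        exact div_le_div₀ hNb0.le hNle hDlow0 hDge
      have hTrpow : T^(-a) = (t₀^a)⁻¹ * (τ^(2*a))⁻¹ := by
        rw [hTdef, Real.mul_rpow ht₀.le (sq_nonneg τ)]
        congr 1
        · exact Real.rpow_neg ht₀.le a
        · rw [← Real.rpow_natCast τ 2, ← Real.rpow_mul hτ0.le]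
          rw [show ((2:ℕ):ℝ) * (-a) = -(2*a) by push_cast; ring]
          exact Real.rpow_neg hτ0.le _
      have hτ2a0 : (0:ℝ) < τ^(2*a) := Real.rpow_pos_of_pos hτ0 _
      have hNbD : Nb / Dlow = C * τ^(2*a) * Real.exp (w/2) := by
        rw [hDlow, hTrpow, hC, Real.exp_neg]
        have e1 : Real.exp (w/2) ≠ 0 := (Real.exp_pos _).ne'
        field_simp
      have hfin : C * τ^(2*a) * Real.exp (w/2) ≤
          A₀ * K / (a * (1 - a)) * (τ ^ (2 * a) * L (1 / τ ^ 2)) * Real.exp (w / 2) *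
            (1 + ε τ) := by
        rw [hετ, ← hC₁]
        have h1 : C ≤ C₁ * L (1/τ^2) :=
          hCC₁.trans (mul_le_mul_of_nonneg_left hLlow2 hC₁0.le)
        calc C * τ^(2*a) * Real.exp (w/2)
            = C * (τ^(2*a) * Real.exp (w/2)) := by ring
          _ ≤ (C₁ * L (1/τ^2)) * (τ^(2*a) * Real.exp (w/2)) :=
              mul_le_mul_of_nonneg_right h1 (by positivity)
          _ = C₁ * (τ ^ (2*a) * L (1/τ^2)) * Real.exp (w/2) * (1 + 0) := by ring
      calc shrinkWeight a m L τ w ≤ Nb / Dlow := hRle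
        _ = C * τ^(2*a) * Real.exp (w/2) := hNbD
        _ ≤ _ := hfin
end

section
/- In the shrinkage prior setup with a ≥ 1 and L satisfying Assumption 1 (in particular L(t) ≤ M for all t > 0), there exists a function ε : (0,1) → ℝ with ε(τ) → 0 as τ → 0⁺ such that for every τ ∈ (0,1) and every w ≥ 0, the posterior shrinkage weight satisfies R(τ, w) ≤ (K M / a) · τ · exp(w/2) · (1 + ε(τ)). (Lemma 3, case a ≥ 1.) -/
set_option maxHeartbeats 1000000


open Filter MeasureTheory Set

section Helpers

lemma cov_deriv {b : ℝ} (hb : 0 < b) :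
    ∀ t ∈ Ioi (0:ℝ), HasDerivWithinAt (fun t => (1+b*t)⁻¹)
      (-(b/(1+b*t)^2)) (Ioi (0:ℝ)) t := by
  intro t ht
  have h0 : (0:ℝ) < 1 + b * t := by have := ht.out; positivity
  have h1 : HasDerivAt (fun t : ℝ => 1 + b*t) b t := by
    simpa using ((hasDerivAt_id t).const_mul b).const_add 1
  have := h1.inv h0.ne'
  rw [neg_div] at this
  exact this.hasDerivWithinAt

lemma cov_inj {b : ℝ} (hb : 0 < b) :
    Set.InjOn (fun t => (1+b*t)⁻¹) (Ioi (0:ℝ)) := by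
  intro x hx y hy hxy
  have hx0 : (0:ℝ) < 1 + b * x := by have := hx.out; positivity
  have hy0 : (0:ℝ) < 1 + b * y := by have := hy.out; positivity
  have : 1 + b * x = 1 + b * y := by
    have := inv_inj.mp hxy
    exact this
  nlinarith [hb]

lemma cov_image {b : ℝ} (hb : 0 < b) :
    (fun t => (1+b*t)⁻¹) '' (Ioi (0:ℝ)) = Ioo (0:ℝ) 1 := by
  ext κ
  constructor
  · rintro ⟨t, ht, rfl⟩
    have ht0 : (0:ℝ) < t := ht
    have h0 : (0:ℝ) < 1 + b * t := by positivity
    have h1 : (1:ℝ) < 1 + b * t := by nlinarith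
    exact ⟨by positivity, inv_lt_one_of_one_lt₀ h1⟩
  · rintro ⟨hκ0, hκ1⟩
    refine ⟨(κ⁻¹ - 1)/b, ?_, ?_⟩
    · have : (1:ℝ) < κ⁻¹ := one_lt_inv₀ hκ0 |>.mpr hκ1
      have : 0 < κ⁻¹ - 1 := by linarith
      exact div_pos this hb
    · have hκ : κ ≠ 0 := ne_of_gt hκ0
      show (1 + b * ((κ⁻¹ - 1)/b))⁻¹ = κ
      rw [mul_div_cancel₀ _ hb.ne']
      rw [show 1 + (κ⁻¹ - 1) = κ⁻¹ by ring, inv_inv]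

lemma cov_integral {b : ℝ} (hb : 0 < b) (g : ℝ → ℝ) :
    ∫ κ in Ioo (0:ℝ) 1, g κ
      = ∫ t in Ioi (0:ℝ), (b/(1+b*t)^2) * g ((1+b*t)⁻¹) := by
  rw [← cov_image hb,
    integral_image_eq_integral_abs_deriv_smul measurableSet_Ioi (cov_deriv hb) (cov_inj hb)]
  refine setIntegral_congr_fun measurableSet_Ioi (fun t ht => ?_)
  have h0 : (0:ℝ) < 1 + b * t := by have := ht.out; positivity
  have : |(-(b/(1+b*t)^2))| = b/(1+b*t)^2 := by
    rw [abs_neg, abs_of_nonneg (by positivity)]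
  simp [this, smul_eq_mul]

lemma cov_integrableOn {b : ℝ} (hb : 0 < b) (g : ℝ → ℝ) :
    IntegrableOn g (Ioo (0:ℝ) 1) ↔
      IntegrableOn (fun t => (b/(1+b*t)^2) * g ((1+b*t)⁻¹)) (Ioi (0:ℝ)) := by
  rw [← cov_image hb,
    integrableOn_image_iff_integrableOn_abs_deriv_smul measurableSet_Ioi (cov_deriv hb) (cov_inj hb)]
  constructor <;> intro h <;> refine h.congr_fun (fun t ht => ?_) measurableSet_Ioi
  · have h0 : (0:ℝ) < 1 + b * t := by have := ht.out; positivity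
    have : |(-(b/(1+b*t)^2))| = b/(1+b*t)^2 := by
      rw [abs_neg, abs_of_nonneg (by positivity)]
    simp [this, smul_eq_mul]
  · have h0 : (0:ℝ) < 1 + b * t := by have := ht.out; positivity
    have : |(-(b/(1+b*t)^2))| = b/(1+b*t)^2 := by
      rw [abs_neg, abs_of_nonneg (by positivity)]
    simp [this, smul_eq_mul]

lemma rpow_base_antitone {x y p : ℝ} (hx : 0 < x) (hxy : x ≤ y) (hp : 0 ≤ p) :
    y^(-p) ≤ x^(-p) := by
  rw [Real.rpow_neg (le_trans hx.le hxy), Real.rpow_neg hx.le]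
  exact inv_anti₀ (Real.rpow_pos_of_pos hx _) (Real.rpow_le_rpow hx.le hxy hp)

lemma aux_pow_bound {x : ℝ} (hx : 0 < x) : (1+x)^(-(3:ℝ)/2) ≤ x^(-(1:ℝ)/4) := by
  rcases le_total x 1 with h|h
  · have h1 : (1+x)^(-(3:ℝ)/2) ≤ 1 :=
      Real.rpow_le_one_of_one_le_of_nonpos (by linarith) (by norm_num)
    have h2 : (1:ℝ) ≤ x^(-(1:ℝ)/4) :=
      Real.one_le_rpow_of_pos_of_le_one_of_nonpos hx h (by norm_num)
    linarith
  · have h1 := rpow_base_antitone (p := (3:ℝ)/2) (x := x) (y := 1+x) hx (by linarith) (by norm_num)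
    have h2 : x^(-((3:ℝ)/2)) ≤ x^(-(1:ℝ)/4) :=
      Real.rpow_le_rpow_of_exponent_le h (by norm_num)
    have e : -(3:ℝ)/2 = -((3:ℝ)/2) := by norm_num
    rw [e]
    linarith

end Helpers

lemma transform_postDensity (a : ℝ) (m : ℕ) (L : ℝ → ℝ) (τ w t : ℝ) (hτ : 0 < τ) (ht : 0 < t) :
    (τ^2/(1+τ^2*t)^2) * postDensity a m L τ w ((1+τ^2*t)⁻¹)
      = (τ^2)^(-a) * t^(-a-1) * (1+τ^2*t)^(-(m:ℝ)/2) * L t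
          * Real.exp (-((1+τ^2*t)⁻¹*w)/2) := by
  have hb : (0:ℝ) < τ^2 := by positivity
  set b : ℝ := τ^2 with hbdef
  set h : ℝ := 1 + b*t with hhdef
  have hh : (0:ℝ) < h := by rw [hhdef]; positivity
  rw [postDensity]
  have hL : ((h⁻¹)⁻¹ - 1)/b = t := by
    rw [inv_inv, hhdef]
    field_simp
    ring
  have e1 : (h⁻¹) ^ (a + (m:ℝ)/2 - 1) = h ^ (-(a + (m:ℝ)/2 - 1)) := by
    rw [Real.inv_rpow hh.le, ← Real.rpow_neg hh.le]
  have e2 : 1 - h⁻¹ = b*t/h := by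
    rw [eq_div_iff hh.ne', sub_mul, inv_mul_cancel₀ hh.ne', hhdef]
    ring
  have e3 : (b*t/h) ^ (-a-1) = b^(-a-1) * t^(-a-1) * h^(a+1) := by
    rw [Real.div_rpow (by positivity) hh.le, Real.mul_rpow hb.le ht.le,
      show (-a-1 : ℝ) = -(a+1) by ring, Real.rpow_neg hh.le, div_eq_mul_inv, inv_inv]
  rw [hL, e1, e2, e3]
  have key : b/h^2 * h^(-(a+(m:ℝ)/2-1)) * (b^(-a-1) * t^(-a-1) * h^(a+1))
      = b^(-a) * t^(-a-1) * h^(-(m:ℝ)/2) := by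
    have h2 : (h:ℝ)^2 = h^(2:ℝ) := by
      rw [← Real.rpow_natCast h 2]; norm_num
    rw [h2, div_eq_mul_inv, ← Real.rpow_neg hh.le]
    rw [show b * h^(-2:ℝ) * h^(-(a+(m:ℝ)/2-1)) * (b^(-a-1) * t^(-a-1) * h^(a+1))
        = (b^(1:ℝ) * b^(-a-1)) * t^(-a-1) * (h^(-2:ℝ) * h^(-(a+(m:ℝ)/2-1)) * h^(a+1)) by
      rw [Real.rpow_one]; ring]
    rw [← Real.rpow_add hb, ← Real.rpow_add hh, ← Real.rpow_add hh,
      show (1:ℝ)+(-a-1) = -a by ring,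
      show (-2:ℝ) + -(a+(m:ℝ)/2-1) + (a+1) = -(m:ℝ)/2 by ring]
  calc b/h^2 * (h ^ (-(a + (m:ℝ)/2 - 1)) * (b^(-a-1) * t^(-a-1) * h^(a+1)) * L t
        * Real.exp (-(h⁻¹ * w)/2))
      = (b/h^2 * h ^ (-(a + (m:ℝ)/2 - 1)) * (b^(-a-1) * t^(-a-1) * h^(a+1)))
        * (L t * Real.exp (-(h⁻¹ * w)/2)) := by ring
    _ = (b^(-a) * t^(-a-1) * h^(-(m:ℝ)/2)) * (L t * Real.exp (-(h⁻¹ * w)/2)) := by rw [key]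
    _ = _ := by ring

/-- **Lemma 3, case `a ≥ 1`.** In the shrinkage prior setup with `a ≥ 1` and `L` satisfying
Assumption 1 (in particular `L(t) ≤ M` for all `t > 0`), there exists a function
`ε : (0,1) → ℝ` with `ε(τ) → 0` as `τ → 0⁺` such that for every `τ ∈ (0,1)` and every `w ≥ 0`,
`R(τ, w) ≤ (K M / a) · τ · exp(w/2) · (1 + ε(τ))`. -/
theorem lemma3_shrinkWeight_upper_bound_ge_one
    (a : ℝ) (ha : 1 ≤ a) (m : ℕ) (hm : 1 ≤ m)
    (L : ℝ → ℝ) (hLmeas : Measurable L) (hLpos : ∀ x > 0, 0 < L x)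
    (hLsv : ∀ c > 0, Tendsto (fun x => L (c * x) / L x) atTop (nhds 1))
    (c₀ t₀ : ℝ) (hc₀ : 0 < c₀) (ht₀ : 0 < t₀) (hLlow : ∀ t ≥ t₀, c₀ ≤ L t)
    (M : ℝ) (hLup : ∀ t > 0, L t ≤ M)
    (K : ℝ) (hK : 0 < K)
    (hLint : IntegrableOn (fun t : ℝ => t ^ (-a - 1) * L t) (Set.Ioi 0))
    (hKval : ∫ t in Set.Ioi (0 : ℝ), t ^ (-a - 1) * L t = 1 / K) :
    ∃ ε : ℝ → ℝ,
      Tendsto ε (nhdsWithin 0 (Set.Ioi 0)) (nhds 0) ∧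
      ∀ τ ∈ Set.Ioo (0 : ℝ) 1, ∀ w ≥ (0 : ℝ),
        shrinkWeight a m L τ w ≤ K * M / a * τ * Real.exp (w / 2) * (1 + ε τ) := by
  have ha0 : (0:ℝ) < a := lt_of_lt_of_le one_pos ha
  have hM : (0:ℝ) < M := by
    have h1 : (0:ℝ) < L 1 := hLpos 1 (by norm_num)
    have h2 : L 1 ≤ M := hLup 1 (by norm_num)
    linarith
  have hmexp : -(m:ℝ)/2 ≤ 0 := by
    have : (0:ℝ) ≤ (m:ℝ)/2 := by positivity
    linarith
  -- the comparison function g₀ and its integral c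
  set g₀ : ℝ → ℝ := fun t => t ^ (-a-1) * L t * (1+t) ^ (-(m:ℝ)/2) with hg₀def
  have hg₀meas : Measurable g₀ :=
    ((measurable_id.pow measurable_const).mul hLmeas).mul
      ((measurable_const.add measurable_id).pow measurable_const)
  have hLprod_nn : ∀ t ∈ Ioi (0:ℝ), 0 ≤ t ^ (-a-1) * L t := fun t ht =>
    mul_nonneg (Real.rpow_nonneg (le_of_lt ht.out) _) (hLpos t ht).le
  have hLprod_nn_ae : (0:ℝ→ℝ) ≤ᵐ[volume.restrict (Ioi 0)] fun t => t ^ (-a-1) * L t := by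
    filter_upwards [ae_restrict_mem measurableSet_Ioi] with t ht
    exact hLprod_nn t ht
  have hg₀int : IntegrableOn g₀ (Ioo (0:ℝ) 1) := by
    refine Integrable.mono' (hLint.mono_set Ioo_subset_Ioi_self)
      hg₀meas.aestronglyMeasurable ?_
    filter_upwards [ae_restrict_mem measurableSet_Ioo] with t ht
    have ht0 : (0:ℝ) < t := ht.1
    have hfac : (1+t) ^ (-(m:ℝ)/2) ≤ 1 :=
      Real.rpow_le_one_of_one_le_of_nonpos (by linarith) hmexp
    have hnn : 0 ≤ g₀ t := by
      refine mul_nonneg (hLprod_nn t ht.1) (Real.rpow_nonneg (by linarith) _)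
    rw [Real.norm_eq_abs, abs_of_nonneg hnn]
    calc g₀ t ≤ t ^ (-a-1) * L t * 1 :=
        mul_le_mul_of_nonneg_left hfac (hLprod_nn t ht.1)
      _ = t ^ (-a-1) * L t := mul_one _
  have hc : 0 < ∫ t in Ioo (0:ℝ) 1, g₀ t := by
    rw [setIntegral_pos_iff_support_of_nonneg_ae ?_ hg₀int]
    · have hsub : Ioo (0:ℝ) 1 ⊆ Function.support g₀ := by
        intro t ht
        have ht0 : (0:ℝ) < t := ht.1
        have hL := hLpos t ht0
        have : 0 < g₀ t := by
          apply mul_pos (mul_pos (Real.rpow_pos_of_pos ht0 _) hL)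
            (Real.rpow_pos_of_pos (by linarith) _)
        exact ne_of_gt this
      rw [Set.inter_eq_right.mpr hsub]
      simp [Real.volume_Ioo]
    · filter_upwards [ae_restrict_mem measurableSet_Ioo] with t ht
      have ht0 : (0:ℝ) < t := ht.1
      exact mul_nonneg (hLprod_nn t ht0) (Real.rpow_nonneg (by linarith) _)
  set c : ℝ := ∫ t in Ioo (0:ℝ) 1, g₀ t with hcdef
  refine ⟨fun τ => max 0 (a * (τ/K + 4*M*τ^((1:ℝ)/2)) / (c*K*M) - 1), ?_, ?_⟩
  · -- the limit
    have h12 : Tendsto (fun τ:ℝ => τ^((1:ℝ)/2)) (nhdsWithin 0 (Ioi 0)) (nhds 0) := by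
      have hct : ContinuousAt (fun τ:ℝ => τ^((1:ℝ)/2)) 0 :=
        Real.continuousAt_rpow_const 0 _ (Or.inr (by norm_num))
      have := hct.tendsto
      rw [Real.zero_rpow (by norm_num : (1:ℝ)/2 ≠ 0)] at this
      exact this.mono_left nhdsWithin_le_nhds
    have hid : Tendsto (fun τ:ℝ => τ) (nhdsWithin 0 (Ioi 0)) (nhds 0) :=
      (continuous_id.tendsto 0).mono_left nhdsWithin_le_nhds
    have hinner : Tendsto (fun τ => a * (τ/K + 4*M*τ^((1:ℝ)/2)) / (c*K*M) - 1)
        (nhdsWithin 0 (Ioi 0)) (nhds (a * ((0:ℝ)/K + 4*M*0) / (c*K*M) - 1)) :=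
      ((((hid.div_const K).add (h12.const_mul (4*M))).const_mul a).div_const (c*K*M)).sub_const 1
    have hval : a * ((0:ℝ)/K + 4*M*0) / (c*K*M) - 1 = -1 := by norm_num
    rw [hval] at hinner
    have hmax := Filter.Tendsto.max
      (tendsto_const_nhds :
        Tendsto (fun _ : ℝ => (0:ℝ)) (nhdsWithin 0 (Ioi 0)) (nhds 0)) hinner
    rw [show max (0:ℝ) (-1) = 0 by norm_num] at hmax
    exact hmax
  · -- the main bound
    rintro τ ⟨hτ0, hτ1⟩ w hw
    have hb : (0:ℝ) < τ^2 := by positivity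
    set b : ℝ := τ^2 with hbdef
    have hb1 : b ≤ 1 := by nlinarith
    set F : ℝ → ℝ := fun t => b^(-a) * t^(-a-1) * (1+b*t)^(-(m:ℝ)/2) * L t
        * Real.exp (-((1+b*t)⁻¹*w)/2) with hFdef
    have hFmeas : Measurable F := by
      have m1 : Measurable fun t : ℝ => b^(-a) * t^(-a-1) :=
        measurable_const.mul (measurable_id.pow measurable_const)
      have m2 : Measurable fun t : ℝ => (1+b*t)^(-(m:ℝ)/2) :=
        (measurable_const.add (measurable_const.mul measurable_id)).pow measurable_const
      have m3 : Measurable fun t : ℝ => Real.exp (-((1+b*t)⁻¹*w)/2) := by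
        apply Real.measurable_exp.comp
        exact (((measurable_const.add (measurable_const.mul measurable_id)).inv.mul_const
          w).neg).div_const 2
      exact ((m1.mul m2).mul hLmeas).mul m3
    have hFnn : ∀ t ∈ Ioi (0:ℝ), 0 ≤ F t := by
      intro t ht
      have ht0 : (0:ℝ) < t := ht
      have h0 : (0:ℝ) < 1 + b*t := by positivity
      exact mul_nonneg (mul_nonneg (mul_nonneg (mul_nonneg
        (Real.rpow_nonneg hb.le _) (Real.rpow_nonneg ht0.le _))
        (Real.rpow_nonneg h0.le _)) (hLpos t ht0).le) (Real.exp_nonneg _)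
    have hexple : ∀ t : ℝ, 0 < t → Real.exp (-((1+b*t)⁻¹*w)/2) ≤ 1 := by
      intro t ht0
      have h0 : (0:ℝ) < 1 + b*t := by positivity
      rw [Real.exp_le_one_iff]
      have : 0 ≤ (1+b*t)⁻¹*w := mul_nonneg (inv_nonneg.mpr h0.le) hw
      linarith
    have hFbound : ∀ t ∈ Ioi (0:ℝ), F t ≤ b^(-a) * (t^(-a-1) * L t) := by
      intro t ht
      have ht0 : (0:ℝ) < t := ht
      have h0 : (0:ℝ) < 1 + b*t := by positivity
      have e1 : (1+b*t)^(-(m:ℝ)/2) ≤ 1 :=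
        Real.rpow_le_one_of_one_le_of_nonpos (by nlinarith) hmexp
      have hA : 0 ≤ b^(-a) * t^(-a-1) :=
        mul_nonneg (Real.rpow_nonneg hb.le _) (Real.rpow_nonneg ht0.le _)
      have pre_nn : 0 ≤ b^(-a) * t^(-a-1) * (1+b*t)^(-(m:ℝ)/2) * L t :=
        mul_nonneg (mul_nonneg hA (Real.rpow_nonneg h0.le _)) (hLpos t ht0).le
      calc F t ≤ b^(-a) * t^(-a-1) * (1+b*t)^(-(m:ℝ)/2) * L t * 1 :=
          mul_le_mul_of_nonneg_left (hexple t ht0) pre_nn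
        _ = b^(-a) * t^(-a-1) * (1+b*t)^(-(m:ℝ)/2) * L t := mul_one _
        _ ≤ b^(-a) * t^(-a-1) * 1 * L t :=
          mul_le_mul_of_nonneg_right (mul_le_mul_of_nonneg_left e1 hA) (hLpos t ht0).le
        _ = b^(-a) * (t^(-a-1) * L t) := by ring
    have hFint : IntegrableOn F (Ioi (0:ℝ)) := by
      refine Integrable.mono' (hLint.const_mul (b^(-a))) hFmeas.aestronglyMeasurable ?_
      filter_upwards [ae_restrict_mem measurableSet_Ioi] with t ht
      rw [Real.norm_eq_abs, abs_of_nonneg (hFnn t ht)]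
      exact hFbound t ht
    set q : ℝ → ℝ := fun t => (1 - (1+b*t)⁻¹) * F t with hqdef
    have hqmeas : Measurable q :=
      (measurable_const.sub (measurable_const.add
        (measurable_const.mul measurable_id)).inv).mul hFmeas
    have hfac01 : ∀ t : ℝ, 0 < t → 0 ≤ 1 - (1+b*t)⁻¹ ∧ 1 - (1+b*t)⁻¹ ≤ 1 := by
      intro t ht0
      have h0 : (0:ℝ) < 1 + b*t := by positivity
      have h1 : (1+b*t)⁻¹ ≤ 1 := by
        rw [inv_le_one_iff₀]; right; nlinarith
      have h2 : 0 ≤ (1+b*t)⁻¹ := inv_nonneg.mpr h0.le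
      constructor <;> linarith
    have hqnn : ∀ t ∈ Ioi (0:ℝ), 0 ≤ q t := by
      intro t ht
      exact mul_nonneg (hfac01 t ht |>.1) (hFnn t ht)
    have hqint : IntegrableOn q (Ioi (0:ℝ)) := by
      refine Integrable.mono' (hLint.const_mul (b^(-a))) hqmeas.aestronglyMeasurable ?_
      filter_upwards [ae_restrict_mem measurableSet_Ioi] with t ht
      rw [Real.norm_eq_abs, abs_of_nonneg (hqnn t ht)]
      calc q t ≤ 1 * F t := mul_le_mul_of_nonneg_right (hfac01 t ht |>.2) (hFnn t ht)
        _ = F t := one_mul _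
        _ ≤ _ := hFbound t ht
    -- identify the two integrals
    have hDen : (∫ κ in (0:ℝ)..1, postDensity a m L τ w κ) = ∫ t in Ioi (0:ℝ), F t := by
      rw [intervalIntegral.integral_of_le zero_le_one, integral_Ioc_eq_integral_Ioo,
        cov_integral hb (postDensity a m L τ w)]
      refine setIntegral_congr_fun measurableSet_Ioi (fun t ht => ?_)
      exact transform_postDensity a m L τ w t hτ0 ht
    have hNum : (∫ κ in (0:ℝ)..1, (1-κ) * postDensity a m L τ w κ)
        = ∫ t in Ioi (0:ℝ), q t := by
      rw [intervalIntegral.integral_of_le zero_le_one, integral_Ioc_eq_integral_Ioo,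
        cov_integral hb (fun κ => (1-κ) * postDensity a m L τ w κ)]
      refine setIntegral_congr_fun measurableSet_Ioi (fun t ht => ?_)
      have h1 := transform_postDensity a m L τ w t hτ0 ht
      show (b/(1+b*t)^2) * ((1 - (1+b*t)⁻¹) * postDensity a m L τ w ((1+b*t)⁻¹)) = q t
      simp only [hqdef, hFdef]
      linear_combination (1 - (1+b*t)⁻¹) * h1
    -- denominator lower bound
    have hDlow : Real.exp (-(w/2)) * b^(-a) * c ≤ ∫ t in Ioi (0:ℝ), F t := by
      have hFnn_ae : (0:ℝ→ℝ) ≤ᵐ[volume.restrict (Ioi 0)] F := by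
        filter_upwards [ae_restrict_mem measurableSet_Ioi] with t ht
        exact hFnn t ht
      have step1 : (∫ t in Ioo (0:ℝ) 1, F t) ≤ ∫ t in Ioi (0:ℝ), F t :=
        setIntegral_mono_set hFint hFnn_ae (HasSubset.Subset.eventuallyLE Ioo_subset_Ioi_self)
      have step2 : (∫ t in Ioo (0:ℝ) 1, (Real.exp (-(w/2)) * b^(-a)) * g₀ t)
          ≤ ∫ t in Ioo (0:ℝ) 1, F t := by
        refine setIntegral_mono_on (hg₀int.const_mul _)
          (hFint.mono_set Ioo_subset_Ioi_self) measurableSet_Ioo ?_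
        rintro t ⟨ht0, ht1⟩
        have hbt : b*t ≤ t := by nlinarith
        have h0bt : (0:ℝ) < 1 + b*t := by positivity
        have h0t : (0:ℝ) < 1 + t := by linarith
        have epow : (1+t)^(-(m:ℝ)/2) ≤ (1+b*t)^(-(m:ℝ)/2) := by
          rw [neg_div]
          exact rpow_base_antitone (p := (m:ℝ)/2) h0bt (by linarith) (by positivity)
        have eexp : Real.exp (-(w/2)) ≤ Real.exp (-((1+b*t)⁻¹*w)/2) := by
          rw [Real.exp_le_exp]
          have hle1 : (1+b*t)⁻¹ ≤ 1 := by
            rw [inv_le_one_iff₀]; right; nlinarith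
          have : (1+b*t)⁻¹*w ≤ w := by
            calc (1+b*t)⁻¹*w ≤ 1*w := mul_le_mul_of_nonneg_right hle1 hw
              _ = w := one_mul _
          linarith
        have prefix_nn : 0 ≤ b^(-a) * t^(-a-1) * L t :=
          mul_nonneg (mul_nonneg (Real.rpow_nonneg hb.le _)
            (Real.rpow_nonneg ht0.le _)) (hLpos t ht0).le
        have hmm : (1+t)^(-(m:ℝ)/2) * Real.exp (-(w/2))
            ≤ (1+b*t)^(-(m:ℝ)/2) * Real.exp (-((1+b*t)⁻¹*w)/2) :=
          mul_le_mul epow eexp (Real.exp_nonneg _) (Real.rpow_nonneg h0bt.le _)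
        calc (Real.exp (-(w/2)) * b^(-a)) * g₀ t
            = (b^(-a) * t^(-a-1) * L t) * ((1+t)^(-(m:ℝ)/2) * Real.exp (-(w/2))) := by
              simp only [hg₀def]; ring
          _ ≤ (b^(-a) * t^(-a-1) * L t)
              * ((1+b*t)^(-(m:ℝ)/2) * Real.exp (-((1+b*t)⁻¹*w)/2)) :=
              mul_le_mul_of_nonneg_left hmm prefix_nn
          _ = F t := by simp only [hFdef]; ring
      have step3 : (∫ t in Ioo (0:ℝ) 1, (Real.exp (-(w/2)) * b^(-a)) * g₀ t)
          = Real.exp (-(w/2)) * b^(-a) * c := by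
        rw [integral_const_mul]
      linarith
    have hDpos : 0 < Real.exp (-(w/2)) * b^(-a) * c := by positivity
    -- numerator upper bound
    have hNup : (∫ t in Ioi (0:ℝ), q t) ≤ b * b^(-a) * (1/K + 4*(M*b^(-(1:ℝ)/4))) := by
      have hqi1 : IntegrableOn q (Ioc (0:ℝ) 1) := hqint.mono_set Ioc_subset_Ioi_self
      have hqi2 : IntegrableOn q (Ioi (1:ℝ)) :=
        hqint.mono_set (Ioi_subset_Ioi zero_le_one)
      have hsum : (∫ t in Ioi (0:ℝ), q t)
          = (∫ t in Ioc (0:ℝ) 1, q t) + ∫ t in Ioi (1:ℝ), q t := by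
        rw [← Ioc_union_Ioi_eq_Ioi (zero_le_one (α := ℝ)),
          setIntegral_union (Ioc_disjoint_Ioi le_rfl) measurableSet_Ioi hqi1 hqi2]
      have hp1 : (∫ t in Ioc (0:ℝ) 1, q t) ≤ b * b^(-a) * (1/K) := by
        have hmono : (∫ t in Ioc (0:ℝ) 1, q t)
            ≤ ∫ t in Ioc (0:ℝ) 1, (b * b^(-a)) * (t^(-a-1) * L t) := by
          refine setIntegral_mono_on hqi1
            (((hLint.mono_set Ioc_subset_Ioi_self).const_mul _)) measurableSet_Ioc ?_
          rintro t ⟨ht0, ht1⟩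
          have h0 : (0:ℝ) < 1 + b*t := by positivity
          have hfb : 1 - (1+b*t)⁻¹ ≤ b := by
            have e2 : 1 - (1+b*t)⁻¹ = b*t/(1+b*t) := by
              rw [eq_div_iff h0.ne', sub_mul, inv_mul_cancel₀ h0.ne']
              ring
            rw [e2]
            calc b*t/(1+b*t) ≤ b*t := div_le_self (by positivity) (by nlinarith)
              _ ≤ b*1 := mul_le_mul_of_nonneg_left ht1 hb.le
              _ = b := mul_one b
          calc q t ≤ b * (b^(-a) * (t^(-a-1) * L t)) :=
              mul_le_mul hfb (hFbound t ht0) (hFnn t ht0) hb.le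
            _ = (b * b^(-a)) * (t^(-a-1) * L t) := by ring
        have htail : (∫ t in Ioc (0:ℝ) 1, t^(-a-1) * L t) ≤ 1/K := by
          rw [← hKval]
          exact setIntegral_mono_set hLint hLprod_nn_ae
            (HasSubset.Subset.eventuallyLE Ioc_subset_Ioi_self)
        rw [integral_const_mul] at hmono
        calc (∫ t in Ioc (0:ℝ) 1, q t)
            ≤ (b * b^(-a)) * ∫ t in Ioc (0:ℝ) 1, t^(-a-1) * L t := hmono
          _ ≤ b * b^(-a) * (1/K) := by
              apply mul_le_mul_of_nonneg_left htail
              positivity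
      have hp2 : (∫ t in Ioi (1:ℝ), q t) ≤ b * b^(-a) * (M*b^(-(1:ℝ)/4)) * 4 := by
        have key : ∀ t ∈ Ioi (1:ℝ), q t
            ≤ (b * b^(-a) * (M*b^(-(1:ℝ)/4))) * t^(-(5:ℝ)/4) := by
          intro t ht
          have ht1 : (1:ℝ) < t := ht
          have ht0 : (0:ℝ) < t := by linarith
          have h0 : (0:ℝ) < 1 + b*t := by positivity
          have hbt0 : (0:ℝ) < b*t := by positivity
          have e2 : 1 - (1+b*t)⁻¹ = b*t*(1+b*t)⁻¹ := by
            field_simp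
            ring
          have epow : (1+b*t)^(-(m:ℝ)/2) ≤ (1+b*t)^(-(1:ℝ)/2) := by
            apply Real.rpow_le_rpow_of_exponent_le (by nlinarith)
            have h1m : (1:ℝ) ≤ (m:ℝ) := by exact_mod_cast hm
            linarith
          have hA : 0 ≤ b^(-a) * t^(-a-1) :=
            mul_nonneg (Real.rpow_nonneg hb.le _) (Real.rpow_nonneg ht0.le _)
          have hFb2 : F t ≤ b^(-a) * t^(-a-1) * (1+b*t)^(-(1:ℝ)/2) * M := by
            have pre_nn : 0 ≤ b^(-a) * t^(-a-1) * (1+b*t)^(-(m:ℝ)/2) * L t :=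
              mul_nonneg (mul_nonneg hA (Real.rpow_nonneg h0.le _)) (hLpos t ht0).le
            calc F t ≤ b^(-a) * t^(-a-1) * (1+b*t)^(-(m:ℝ)/2) * L t * 1 :=
                mul_le_mul_of_nonneg_left (hexple t ht0) pre_nn
              _ = b^(-a) * t^(-a-1) * (1+b*t)^(-(m:ℝ)/2) * L t := mul_one _
              _ ≤ b^(-a) * t^(-a-1) * (1+b*t)^(-(1:ℝ)/2) * M := by
                  refine mul_le_mul (mul_le_mul_of_nonneg_left epow hA)
                    (hLup t ht0) (hLpos t ht0).le ?_
                  exact mul_nonneg hA (Real.rpow_nonneg h0.le _)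
          have hq1 : q t ≤ (b*t*(1+b*t)⁻¹) * (b^(-a) * t^(-a-1) * (1+b*t)^(-(1:ℝ)/2) * M) := by
            have hfac_nn : 0 ≤ b*t*(1+b*t)⁻¹ :=
              mul_nonneg hbt0.le (inv_nonneg.mpr h0.le)
            have : q t = (b*t*(1+b*t)⁻¹) * F t := by
              simp only [hqdef]
              rw [e2]
            rw [this]
            exact mul_le_mul_of_nonneg_left hFb2 hfac_nn
          have et : t * t^(-a-1) = t^(-a) := by
            nth_rewrite 1 [← Real.rpow_one t]
            rw [← Real.rpow_add ht0, show (1:ℝ)+(-a-1) = -a by ring]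
          have einv : (1+b*t)⁻¹ * (1+b*t)^(-(1:ℝ)/2) = (1+b*t)^(-(3:ℝ)/2) := by
            rw [← Real.rpow_neg_one (1+b*t), ← Real.rpow_add h0]
            norm_num
          have ea : t^(-a) ≤ t^(-(1:ℝ)) :=
            Real.rpow_le_rpow_of_exponent_le ht1.le (by linarith)
          have eb : (1+b*t)^(-(3:ℝ)/2) ≤ b^(-(1:ℝ)/4) * t^(-(1:ℝ)/4) := by
            calc (1+b*t)^(-(3:ℝ)/2) ≤ (b*t)^(-(1:ℝ)/4) := aux_pow_bound hbt0
              _ = b^(-(1:ℝ)/4) * t^(-(1:ℝ)/4) := Real.mul_rpow hb.le ht0.le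
          have ed : t^(-(1:ℝ)) * t^(-(1:ℝ)/4) = t^(-(5:ℝ)/4) := by
            rw [← Real.rpow_add ht0]
            norm_num
          have ecomb : t^(-a) * (1+b*t)^(-(3:ℝ)/2)
              ≤ t^(-(1:ℝ)) * (b^(-(1:ℝ)/4) * t^(-(1:ℝ)/4)) :=
            mul_le_mul ea eb (Real.rpow_nonneg h0.le _) (Real.rpow_nonneg ht0.le _)
          calc q t ≤ (b*t*(1+b*t)⁻¹) * (b^(-a) * t^(-a-1) * (1+b*t)^(-(1:ℝ)/2) * M) := hq1
            _ = (b * b^(-a) * M) * ((t * t^(-a-1)) * ((1+b*t)⁻¹ * (1+b*t)^(-(1:ℝ)/2))) := by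
                ring
            _ = (b * b^(-a) * M) * (t^(-a) * (1+b*t)^(-(3:ℝ)/2)) := by rw [et, einv]
            _ ≤ (b * b^(-a) * M) * (t^(-(1:ℝ)) * (b^(-(1:ℝ)/4) * t^(-(1:ℝ)/4))) := by
                refine mul_le_mul_of_nonneg_left ecomb ?_
                exact mul_nonneg (mul_nonneg hb.le (Real.rpow_nonneg hb.le _)) hM.le
            _ = (b * b^(-a) * (M*b^(-(1:ℝ)/4))) * (t^(-(1:ℝ)) * t^(-(1:ℝ)/4)) := by ring
            _ = (b * b^(-a) * (M*b^(-(1:ℝ)/4))) * t^(-(5:ℝ)/4) := by rw [ed]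
        have hint2 : IntegrableOn
            (fun t : ℝ => (b * b^(-a) * (M*b^(-(1:ℝ)/4))) * t^(-(5:ℝ)/4)) (Ioi (1:ℝ)) :=
          (integrableOn_Ioi_rpow_of_lt (by norm_num) one_pos).const_mul _
        have hmono2 := setIntegral_mono_on hqi2 hint2 measurableSet_Ioi key
        rw [integral_const_mul, integral_Ioi_rpow_of_lt (by norm_num : -(5:ℝ)/4 < -1) one_pos]
          at hmono2
        have hval4 : -(1:ℝ) ^ (-(5:ℝ)/4 + 1) / (-(5:ℝ)/4 + 1) = 4 := by
          rw [Real.one_rpow]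
          norm_num
        rw [hval4] at hmono2
        linarith
      have hring : b * b^(-a) * (1/K + 4*(M*b^(-(1:ℝ)/4)))
          = b * b^(-a) * (1/K) + b * b^(-a) * (M*b^(-(1:ℝ)/4)) * 4 := by ring
      rw [hsum, hring]
      exact add_le_add hp1 hp2
    -- final assembly
    have hba : (0:ℝ) < b^(-a) := Real.rpow_pos_of_pos hb _
    have hb14 : (0:ℝ) < b^(-(1:ℝ)/4) := Real.rpow_pos_of_pos hb _
    have hnb_nn : 0 ≤ b * b^(-a) * (1/K + 4*(M*b^(-(1:ℝ)/4))) := by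
      have h1 : 0 ≤ 1/K + 4*(M*b^(-(1:ℝ)/4)) := by
        have := one_div_pos.mpr hK
        nlinarith
      exact mul_nonneg (mul_nonneg hb.le hba.le) h1
    have hfinal : shrinkWeight a m L τ w
        ≤ (b * b^(-a) * (1/K + 4*(M*b^(-(1:ℝ)/4)))) / (Real.exp (-(w/2)) * b^(-a) * c) := by
      rw [shrinkWeight, hNum, hDen]
      exact div_le_div₀ hnb_nn hNup hDpos hDlow
    have hsimp : (b * b^(-a) * (1/K + 4*(M*b^(-(1:ℝ)/4)))) / (Real.exp (-(w/2)) * b^(-a) * c)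
        = Real.exp (w/2) * ((b * (1/K) + 4*M*(b*b^(-(1:ℝ)/4)))/c) := by
      rw [Real.exp_neg]
      field_simp
    have hbb : b * b^(-(1:ℝ)/4) = τ * τ^((1:ℝ)/2) := by
      have h1 : b * b^(-(1:ℝ)/4) = b^((3:ℝ)/4) := by
        nth_rewrite 1 [← Real.rpow_one b]
        rw [← Real.rpow_add hb]
        norm_num
      have h2 : τ * τ^((1:ℝ)/2) = τ^((3:ℝ)/2) := by
        nth_rewrite 1 [← Real.rpow_one τ]
        rw [← Real.rpow_add hτ0]
        norm_num
      have h3 : b^((3:ℝ)/4) = τ^((3:ℝ)/2) := by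
        rw [hbdef, ← Real.rpow_natCast τ 2, ← Real.rpow_mul hτ0.le]
        norm_num
      rw [h1, h2, h3]
    have hXle : a * (τ/K + 4*M*τ^((1:ℝ)/2)) / (c*K*M)
        ≤ 1 + max 0 (a * (τ/K + 4*M*τ^((1:ℝ)/2)) / (c*K*M) - 1) := by
      have := le_max_right (0:ℝ) (a * (τ/K + 4*M*τ^((1:ℝ)/2)) / (c*K*M) - 1)
      linarith
    have hKMτ : (0:ℝ) < K*M/a*τ*Real.exp (w/2) := by positivity
    have hEq : K*M/a*τ*Real.exp (w/2) * (a * (τ/K + 4*M*τ^((1:ℝ)/2)) / (c*K*M))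
        = Real.exp (w/2) * ((b * (1/K) + 4*M*(τ*τ^((1:ℝ)/2)))/c) := by
      rw [hbdef]
      field_simp
    show shrinkWeight a m L τ w ≤ K*M/a*τ*Real.exp (w/2)
        * (1 + max 0 (a * (τ/K + 4*M*τ^((1:ℝ)/2)) / (c*K*M) - 1))
    calc shrinkWeight a m L τ w
        ≤ (b * b^(-a) * (1/K + 4*(M*b^(-(1:ℝ)/4)))) / (Real.exp (-(w/2)) * b^(-a) * c) :=
          hfinal
      _ = Real.exp (w/2) * ((b * (1/K) + 4*M*(b*b^(-(1:ℝ)/4)))/c) := hsimp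
      _ = Real.exp (w/2) * ((b * (1/K) + 4*M*(τ*τ^((1:ℝ)/2)))/c) := by rw [hbb]
      _ = K*M/a*τ*Real.exp (w/2) * (a * (τ/K + 4*M*τ^((1:ℝ)/2)) / (c*K*M)) := hEq.symm
      _ ≤ K*M/a*τ*Real.exp (w/2)
          * (1 + max 0 (a * (τ/K + 4*M*τ^((1:ℝ)/2)) / (c*K*M) - 1)) :=
          mul_le_mul_of_nonneg_left hXle hKMτ.le
end

section
/- For every real r ≥ 1 and every real c > r + 1, the incomplete gamma integral satisfies e^{−c} c^{r−1} ≤ ∫_c^∞ e^{−u} u^{r−1} du ≤ r e^{−c} c^{r−1}. (Lemma 5; due to Gabcke.) -/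
open MeasureTheory

/-- **Lemma 5 (Gabcke).** For every real `r ≥ 1` and every real `c > r + 1`, the upper incomplete
gamma integral satisfies `e^(-c) c^(r-1) ≤ ∫_c^∞ e^(-u) u^(r-1) du ≤ r e^(-c) c^(r-1)`. -/
theorem incomplete_gamma_bounds (r : ℝ) (hr : 1 ≤ r) (c : ℝ) (hc : r + 1 < c) :
    Real.exp (-c) * c ^ (r - 1) ≤ (∫ u in Set.Ioi c, Real.exp (-u) * u ^ (r - 1)) ∧
    (∫ u in Set.Ioi c, Real.exp (-u) * u ^ (r - 1)) ≤ r * (Real.exp (-c) * c ^ (r - 1)) := by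
  have hc0 : (0:ℝ) < c := by linarith
  set f : ℝ → ℝ := fun u => Real.exp (-u) * u ^ (r - 1) with hf
  set g : ℝ → ℝ := fun u => Real.exp (-u) * u ^ (r - 2) * (u - (r - 1)) with hg
  -- f is integrable on Ioi c
  have hfint : IntegrableOn f (Set.Ioi c) :=
    (Real.GammaIntegral_convergent (by linarith : (0:ℝ) < r)).mono_set
      (Set.Ioi_subset_Ioi hc0.le)
  -- pointwise facts on Ici c
  have hgf : ∀ u ∈ Set.Ici c, 0 ≤ g u ∧ g u ≤ f u := by
    intro u hu
    have hu0 : (0:ℝ) < u := lt_of_lt_of_le hc0 hu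
    have hur : r - 1 ≤ u := by have := hu.out; linarith
    have h1 : u ^ (r - 1) = u ^ (r - 2) * u := by
      rw [← Real.rpow_add_one hu0.ne' (r-2)]; ring_nf
    constructor
    · exact mul_nonneg (mul_nonneg (Real.exp_pos _).le (Real.rpow_nonneg hu0.le _))
        (by linarith)
    · simp only [hg, hf, h1]
      have he := Real.exp_pos (-u)
      have hp := Real.rpow_nonneg hu0.le (r - 2)
      nlinarith [mul_nonneg he.le hp]
  -- g is integrable on Ioi c
  have hgint : IntegrableOn g (Set.Ioi c) := by
    refine hfint.mono' ?_ ?_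
    · refine (ContinuousOn.aestronglyMeasurable ?_ measurableSet_Ioi)
      intro u hu
      have hu0 : (0:ℝ) < u := lt_of_lt_of_le hc0 (le_of_lt hu)
      exact ContinuousAt.continuousWithinAt <|
        (((Real.continuous_exp.comp continuous_neg).continuousAt).mul
          (Real.continuousAt_rpow_const u (r-2) (Or.inl hu0.ne'))).mul
          ((continuous_id.sub continuous_const).continuousAt)
    · filter_upwards [ae_restrict_mem measurableSet_Ioi] with u hu
      obtain ⟨h0, h1⟩ := hgf u (Set.Ioi_subset_Ici_self hu)
      rwa [Real.norm_eq_abs, abs_of_nonneg h0]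
  -- derivative: f' = -g on Ici c
  have hderiv : ∀ u ∈ Set.Ici c, HasDerivAt f (-(g u)) u := by
    intro u hu
    have hu0 : (0:ℝ) < u := lt_of_lt_of_le hc0 hu
    have h1 : HasDerivAt (fun x : ℝ => Real.exp (-x)) (-Real.exp (-u)) u := by
      simpa [Function.comp_def] using ((Real.hasDerivAt_exp (-u)).comp u (hasDerivAt_neg u))
    have h2 : HasDerivAt (fun x : ℝ => x ^ (r - 1)) ((r - 1) * u ^ (r - 2)) u := by
      simpa [show r - 1 - 1 = r - 2 by ring] using
        Real.hasDerivAt_rpow_const (p := r - 1) (Or.inl hu0.ne')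
    have : HasDerivAt (fun x : ℝ => Real.exp (-x) * x ^ (r - 1))
        (-Real.exp (-u) * u ^ (r - 1) + Real.exp (-u) * ((r - 1) * u ^ (r - 2))) u := h1.mul h2
    convert this using 1
    have h3 : u ^ (r - 1) = u ^ (r - 2) * u := by
      rw [← Real.rpow_add_one hu0.ne' (r-2)]; ring_nf
    simp only [hg, h3]; ring
  -- limit of f at infinity
  have htend : Filter.Tendsto f Filter.atTop (nhds 0) := by
    have := tendsto_rpow_mul_exp_neg_mul_atTop_nhds_zero (r - 1) 1 one_pos
    refine this.congr' ?_
    filter_upwards with x; simp [hf, mul_comm, neg_mul]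
  -- FTC: ∫ g = f c
  have hftc : (∫ u in Set.Ioi c, g u) = f c := by
    have := integral_Ioi_of_hasDerivAt_of_tendsto' hderiv hgint.neg htend
    rw [integral_neg] at this
    linarith [this]
  constructor
  · -- lower bound: f c = ∫ g ≤ ∫ f
    have h := setIntegral_mono_on hgint hfint measurableSet_Ioi
      (fun u hu => (hgf u (Set.Ioi_subset_Ici_self hu)).2)
    rw [hftc] at h
    exact h
  · -- upper bound
    have hkey : (∫ u in Set.Ioi c, f u) ≤ (c / (c - (r - 1))) * ∫ u in Set.Ioi c, g u := by
      rw [← integral_const_mul]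
      refine setIntegral_mono_on hfint (hgint.const_mul _) measurableSet_Ioi ?_
      intro u hu
      have hu0 : (0:ℝ) < u := lt_of_lt_of_le hc0 hu.le
      have hcr : (0:ℝ) < c - (r - 1) := by linarith
      have h1 : u ^ (r - 1) = u ^ (r - 2) * u := by
        rw [← Real.rpow_add_one hu0.ne' (r-2)]; ring_nf
      simp only [hf, hg, h1]
      rw [div_mul_eq_mul_div, le_div_iff₀ hcr]
      have he := (Real.exp_pos (-u)).le
      have hp := Real.rpow_nonneg hu0.le (r - 2)
      have huc : c ≤ u := hu.le
      have hur : r - 1 < u := by linarith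
      nlinarith [mul_nonneg (mul_nonneg he hp) (sub_nonneg.mpr huc)]
    rw [hftc] at hkey
    refine hkey.trans ?_
    have hfc : 0 ≤ f c := mul_nonneg (Real.exp_pos _).le (Real.rpow_nonneg hc0.le _)
    have hdiv : c / (c - (r - 1)) ≤ r := by
      rw [div_le_iff₀ (by linarith)]
      nlinarith
    simp only [hf] at hfc ⊢
    nlinarith
end

section
/- Let Z₁, …, Z_m be independent random variables on a probability space each taking values in {0,1}, with p_i = E[Z_i], Z = Σ_{i=1}^m Z_i, μ = Σ_{i=1}^m p_i, and p = μ/m, and assume 0 < p < 1. Then for every λ with 0 < λ < m − μ, P(Z ≥ μ + λ) ≤ exp(−m · H_p(p + λ/m)). (Lemma 6, upper-tail generalized Chernoff–Hoeffding bound.) -/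
open MeasureTheory ProbabilityTheory

/-- Relative entropy of `x` with respect to `p`:
`H_p(x) = x log(x/p) + (1-x) log((1-x)/(1-p))`. -/
noncomputable def relEntropy (p x : ℝ) : ℝ :=
  x * Real.log (x / p) + (1 - x) * Real.log ((1 - x) / (1 - p))

/-- AM-GM: product of nonnegatives with fixed mean is at most the mean to the card. -/
lemma prod_le_pow_of_sum_eq {ι : Type*} (s : Finset ι) (a : ι → ℝ)
    (ha : ∀ i ∈ s, 0 ≤ a i) (c : ℝ) (hc : 0 ≤ c)
    (hsum : ∑ i ∈ s, a i = s.card * c) :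
    ∏ i ∈ s, a i ≤ c ^ s.card := by
  rcases Nat.eq_zero_or_pos s.card with h0 | hpos
  · rw [Finset.card_eq_zero] at h0
    simp [h0]
  · set n := s.card with hn
    have hn0 : (0:ℝ) < n := by exact_mod_cast hpos
    have hgm := Real.geom_mean_le_arith_mean_weighted s (fun _ => (n:ℝ)⁻¹) a
      (fun i _ => by positivity)
      (by simp [Finset.sum_const, ← hn]; field_simp) ha
    have hmean : ∑ i ∈ s, (n:ℝ)⁻¹ * a i = c := by
      rw [← Finset.mul_sum, hsum]
      field_simp
    rw [hmean] at hgm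
    have hprod_nonneg : ∀ i ∈ s, (0:ℝ) ≤ a i ^ ((n:ℝ)⁻¹) :=
      fun i hi => Real.rpow_nonneg (ha i hi) _
    have h1 : (∏ i ∈ s, a i ^ ((n:ℝ)⁻¹)) ^ n ≤ c ^ n :=
      pow_le_pow_left₀ (Finset.prod_nonneg hprod_nonneg) hgm n
    have h2 : (∏ i ∈ s, a i ^ ((n:ℝ)⁻¹)) ^ n = ∏ i ∈ s, a i := by
      rw [← Finset.prod_pow]
      refine Finset.prod_congr rfl fun i hi => ?_
      rw [← Real.rpow_natCast (a i ^ ((n:ℝ)⁻¹)) n, ← Real.rpow_mul (ha i hi)]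
      rw [inv_mul_cancel₀ (ne_of_gt hn0), Real.rpow_one]
    rwa [h2] at h1

/-- **Lemma 6, upper tail (generalized Chernoff–Hoeffding bound).** Let `Z₁, …, Z_m` be independent
`{0,1}`-valued random variables with `p_i = E[Z_i]`, `Z = Σ Z_i`, `μ = Σ p_i`, `p = μ/m ∈ (0,1)`.
Then for `0 < λ < m - μ`, `P(Z ≥ μ + λ) ≤ exp(-m H_p(p + λ/m))`. -/
theorem chernoff_hoeffding_upper
    {Ω : Type*} [MeasureSpace Ω] [IsProbabilityMeasure (ℙ : Measure Ω)]
    (m : ℕ) (hm : 0 < m) (Z : Fin m → Ω → ℝ)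
    (hZmeas : ∀ i, Measurable (Z i))
    (hZ01 : ∀ i, ∀ ω, Z i ω = 0 ∨ Z i ω = 1)
    (hindep : iIndepFun Z ℙ)
    (μ p : ℝ) (hμ : μ = ∑ i, ∫ ω, Z i ω) (hp : p = μ / m)
    (hp0 : 0 < p) (hp1 : p < 1)
    (lam : ℝ) (hlam0 : 0 < lam) (hlam : lam < m - μ) :
    (ℙ {ω | μ + lam ≤ ∑ i, Z i ω}).toReal ≤
      Real.exp (-(m * relEntropy p (p + lam / m))) := by
  have hm' : (0:ℝ) < m := by exact_mod_cast hm
  set x : ℝ := p + lam / m with hxdef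
  have hμm : μ = m * p := by rw [hp]; field_simp
  have hpx : p < x := by
    have h := div_pos hlam0 hm'
    rw [hxdef]; linarith
  have hx0 : 0 < x := lt_trans hp0 hpx
  have hx1 : x < 1 := by
    have h1 : lam / m < 1 - p := by
      rw [div_lt_iff₀ hm']
      have : (1 - p) * m = m - μ := by rw [hμm]; ring
      linarith [this ▸ hlam]
    rw [hxdef]; linarith
  have h1x : 0 < 1 - x := by linarith
  have h1p : 0 < 1 - p := by linarith
  -- optimal exponent
  set t : ℝ := Real.log ((x / p) / ((1 - x) / (1 - p))) with htdef
  have hA : (1:ℝ) < x / p := (one_lt_div hp0).mpr hpx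
  have hB0 : (0:ℝ) < (1 - x) / (1 - p) := div_pos h1x h1p
  have hB1 : (1 - x) / (1 - p) < 1 := (div_lt_one h1p).mpr (by linarith)
  have hAB : (1:ℝ) ≤ (x / p) / ((1 - x) / (1 - p)) := by
    rw [le_div_iff₀ hB0]; nlinarith
  have ht0 : 0 ≤ t := Real.log_nonneg hAB
  have het : Real.exp t = (x / p) / ((1 - x) / (1 - p)) :=
    Real.exp_log (lt_of_lt_of_le one_pos hAB)
  have het1 : 0 ≤ Real.exp t - 1 := by
    have := Real.one_le_exp ht0; linarith
  -- pointwise identity exp(t * Z i ω) = 1 + (e^t - 1) * Z i ω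
  have hexp_eq : ∀ i ω, Real.exp (t * Z i ω) = 1 + (Real.exp t - 1) * Z i ω := by
    intro i ω
    rcases hZ01 i ω with h | h <;> simp [h]
  have hZint : ∀ i, Integrable (Z i) ℙ := by
    intro i
    refine ⟨(hZmeas i).aestronglyMeasurable, ?_⟩
    refine HasFiniteIntegral.mono' (hasFiniteIntegral_const (1:ℝ)) ?_
    filter_upwards with ω
    rcases hZ01 i ω with h | h <;> simp [h]
  have hint : ∀ i, Integrable (fun ω => Real.exp (t * Z i ω)) ℙ := by
    intro i
    have : (fun ω => Real.exp (t * Z i ω))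
        = fun ω => 1 + (Real.exp t - 1) * Z i ω := funext fun ω => hexp_eq i ω
    rw [this]
    exact (integrable_const 1).add ((hZint i).const_mul _)
  -- the mgf of each Z i
  have hmgf : ∀ i, mgf (Z i) ℙ t = 1 + (Real.exp t - 1) * ∫ ω, Z i ω := by
    intro i
    unfold mgf
    simp_rw [hexp_eq]
    rw [integral_add (integrable_const 1) ((hZint i).const_mul _),
      integral_const, integral_const_mul]
    simp
  -- each mean is nonnegative
  have hpi_nonneg : ∀ i : Fin m, 0 ≤ ∫ ω, Z i ω := by
    intro i
    refine integral_nonneg fun ω => ?_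
    rcases hZ01 i ω with h | h <;> simp [h]
  -- Chernoff bound
  have hint_sum : Integrable (fun ω => Real.exp (t * (∑ i, Z i) ω)) ℙ :=
    hindep.integrable_exp_mul_sum hZmeas (fun i _ => hint i)
  have hset : {ω | μ + lam ≤ ∑ i, Z i ω} = {ω | μ + lam ≤ (∑ i, Z i) ω} := by
    ext ω; simp [Finset.sum_apply]
  have hcher := measure_ge_le_exp_mul_mgf (X := ∑ i, Z i) (μ := ℙ) (μ + lam) ht0 hint_sum
  rw [← hset] at hcher
  -- product of mgfs and AM-GM
  set c : ℝ := 1 + (Real.exp t - 1) * p with hcdef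
  have hc0 : 0 ≤ c := by positivity
  have hprod : mgf (∑ i, Z i) ℙ t ≤ c ^ m := by
    rw [hindep.mgf_sum hZmeas]
    have hcard : (Finset.univ : Finset (Fin m)).card = m := by simp
    calc ∏ i, mgf (Z i) ℙ t
        = ∏ i, (1 + (Real.exp t - 1) * ∫ ω, Z i ω) :=
          Finset.prod_congr rfl fun i _ => hmgf i
      _ ≤ c ^ m := by
          have key := prod_le_pow_of_sum_eq (Finset.univ : Finset (Fin m))
            (fun i => 1 + (Real.exp t - 1) * ∫ ω, Z i ω)
            (fun i _ => by have := hpi_nonneg i; positivity) c hc0 ?_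
          · rwa [hcard] at key
          · rw [Finset.sum_add_distrib, Finset.sum_const, ← Finset.mul_sum, ← hμ, hcard, hμm]
            ring
  have hmain : (ℙ {ω | μ + lam ≤ ∑ i, Z i ω}).toReal
      ≤ Real.exp (-t * (μ + lam)) * c ^ m := by
    refine le_trans hcher ?_
    exact mul_le_mul_of_nonneg_left hprod (Real.exp_nonneg _)
  refine le_trans hmain (le_of_eq ?_)
  -- now compute: c = (1-p)/(1-x)
  have hcval : c = (1 - p) / (1 - x) := by
    rw [hcdef, het]
    field_simp
    ring
  have hμlam : μ + lam = m * x := by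
    rw [hμm, hxdef]; field_simp
  -- logs
  set a : ℝ := Real.log (x / p) with hadef
  set b : ℝ := Real.log ((1 - x) / (1 - p)) with hbdef
  have htab : t = a - b := by
    rw [htdef, hadef, hbdef, Real.log_div (by positivity) (by positivity)]
  have hcexp : c = Real.exp (-b) := by
    rw [hcval, hbdef, ← Real.log_inv, Real.exp_log (by positivity)]
    rw [inv_div]
  rw [hcexp, ← Real.exp_nat_mul, ← Real.exp_add, hμlam, htab]
  congr 1
  unfold relEntropy
  rw [← hadef, ← hbdef]
  ring
end

section
/- In the shrinkage prior setup with a ≥ 1/2 and L satisfying Assumption 1, let (τ_n) be positive reals with τ_n → 0, and for each n let W_n be a nonnegative random variable whose distribution is the Gamma distribution with shape m/2 and rate 1/2 (i.e. the chi-squared distribution with m degrees of freedom). Then R(τ_n, W_n) → 0 in probability as n → ∞. (Proposition 1: for an inactive group, the posterior shrinkage weight tends to 0 in probability.) -/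
open Filter MeasureTheory ProbabilityTheory
open scoped ENNReal

set_option maxHeartbeats 1000000

lemma shrink_bound
    (a : ℝ) (ha : 1 / 2 ≤ a) (m : ℕ) (hm : 1 ≤ m)
    (L : ℝ → ℝ) (hLpos : ∀ x > 0, 0 < L x)
    (c₀ t₀ : ℝ) (hc₀ : 0 < c₀) (ht₀ : 0 < t₀) (hLlow : ∀ t ≥ t₀, c₀ ≤ L t)
    (M : ℝ) (hLup : ∀ t > 0, L t ≤ M)
    (τ w δ : ℝ) (hτ : 0 < τ) (hs1 : 2 * (t₀ * τ ^ 2) ≤ 1) (hw : 0 ≤ w)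
    (hδ0 : 0 < δ) (hδ1 : δ < 1) :
    shrinkWeight a m L τ w ≤
      δ + M * δ ^ (-a) * Real.exp (w / 2) * (t₀ * τ ^ 2) ^ a /
        ((1 / 2 : ℝ) ^ (a + (m : ℝ) / 2 - 1) * (2 : ℝ) ^ (-a - 1) * c₀ / 3) := by
  have hm1 : (1 : ℝ) ≤ (m : ℝ) := by exact_mod_cast hm
  have hp0 : 0 ≤ a + (m : ℝ) / 2 - 1 := by linarith
  have hs : 0 < t₀ * τ ^ 2 := by positivity
  have hprod3 : (1 + t₀ * τ ^ 2) * (1 + 2 * (t₀ * τ ^ 2)) ≤ 3 := by nlinarith [hs.le, hs1]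
  have hC : 0 < (1 / 2 : ℝ) ^ (a + (m : ℝ) / 2 - 1) * (2 : ℝ) ^ (-a - 1) * c₀ / 3 := by
    have h1 : (0:ℝ) < (1 / 2 : ℝ) ^ (a + (m : ℝ) / 2 - 1) := Real.rpow_pos_of_pos (by norm_num) _
    have h2 : (0:ℝ) < (2 : ℝ) ^ (-a - 1) := Real.rpow_pos_of_pos (by norm_num) _
    positivity
  have hM : 0 < M := hc₀.trans_le ((hLlow t₀ le_rfl).trans (hLup t₀ ht₀))
  have hRHS2 : 0 ≤ M * δ ^ (-a) * Real.exp (w / 2) * (t₀ * τ ^ 2) ^ a /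
      ((1 / 2 : ℝ) ^ (a + (m : ℝ) / 2 - 1) * (2 : ℝ) ^ (-a - 1) * c₀ / 3) := by
    apply div_nonneg _ hC.le
    have := Real.rpow_nonneg hs.le a
    have := Real.rpow_nonneg hδ0.le (-a)
    have := Real.exp_nonneg (w / 2)
    positivity
  unfold shrinkWeight
  by_cases hN : IntervalIntegrable (fun κ => (1 - κ) * postDensity a m L τ w κ)
      MeasureTheory.volume 0 1
  swap
  · rw [intervalIntegral.integral_undef hN, zero_div]; linarith
  by_cases hD : IntervalIntegrable (fun κ => postDensity a m L τ w κ)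
      MeasureTheory.volume 0 1
  swap
  · rw [intervalIntegral.integral_undef hD, div_zero]; linarith
  rw [intervalIntegral.integral_of_le zero_le_one, intervalIntegral.integral_of_le zero_le_one]
  have hNI : IntegrableOn (fun κ => (1 - κ) * postDensity a m L τ w κ) (Set.Ioc 0 1) :=
    (intervalIntegrable_iff_integrableOn_Ioc_of_le zero_le_one).mp hN
  have hDI : IntegrableOn (fun κ => postDensity a m L τ w κ) (Set.Ioc 0 1) :=
    (intervalIntegrable_iff_integrableOn_Ioc_of_le zero_le_one).mp hD
  -- nonnegativity
  have hπnn : ∀ κ ∈ Set.Ioc (0:ℝ) 1, 0 ≤ postDensity a m L τ w κ := by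
    rintro κ ⟨hκ0, hκ1⟩
    rcases hκ1.lt_or_eq with h1 | h1
    · have hinv : 1 < κ⁻¹ := by
        rw [show κ⁻¹ = 1 / κ from (one_div κ).symm, lt_div_iff₀ hκ0]; linarith
      have harg : 0 < (κ⁻¹ - 1) / τ ^ 2 := div_pos (by linarith) (by positivity)
      have hL := (hLpos _ harg).le
      unfold postDensity
      exact mul_nonneg (mul_nonneg (mul_nonneg (Real.rpow_nonneg hκ0.le _)
        (Real.rpow_nonneg (by linarith) _)) hL) (Real.exp_nonneg _)
    · subst h1
      unfold postDensity
      rw [sub_self, Real.zero_rpow (by intro h; linarith [h] : (-a - 1 : ℝ) ≠ 0)]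
      simp
  -- denominator lower bound
  have h1s : (0:ℝ) < 1 + t₀ * τ ^ 2 := by linarith
  have h12s : (0:ℝ) < 1 + 2 * (t₀ * τ ^ 2) := by linarith
  have hκ₂pos : 0 < (1 + 2 * (t₀ * τ ^ 2))⁻¹ := inv_pos.mpr h12s
  have hκ₂half : (1:ℝ) / 2 ≤ (1 + 2 * (t₀ * τ ^ 2))⁻¹ := by
    rw [show (1 + 2 * (t₀ * τ ^ 2))⁻¹ = 1 / (1 + 2 * (t₀ * τ ^ 2)) from (one_div _).symm,
      le_div_iff₀ h12s]
    linarith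
  have hκ₁lt1 : (1 + t₀ * τ ^ 2)⁻¹ < 1 := by
    rw [show (1 + t₀ * τ ^ 2)⁻¹ = 1 / (1 + t₀ * τ ^ 2) from (one_div _).symm, div_lt_one h1s]
    linarith
  have hκ₂ltκ₁ : (1 + 2 * (t₀ * τ ^ 2))⁻¹ < (1 + t₀ * τ ^ 2)⁻¹ := by
    rw [show (1 + 2 * (t₀ * τ ^ 2))⁻¹ = 1 / (1 + 2 * (t₀ * τ ^ 2)) from (one_div _).symm,
      show (1 + t₀ * τ ^ 2)⁻¹ = 1 / (1 + t₀ * τ ^ 2) from (one_div _).symm]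
    exact one_div_lt_one_div_of_lt h1s (by linarith)
  have hsubD : Set.Ioc (1 + 2 * (t₀ * τ ^ 2))⁻¹ (1 + t₀ * τ ^ 2)⁻¹ ⊆ Set.Ioc (0:ℝ) 1 :=
    Set.Ioc_subset_Ioc hκ₂pos.le hκ₁lt1.le
  have hlow : ∀ κ ∈ Set.Ioc (1 + 2 * (t₀ * τ ^ 2))⁻¹ (1 + t₀ * τ ^ 2)⁻¹,
      (1/2 : ℝ) ^ (a + (m:ℝ)/2 - 1) * (2 * (t₀ * τ ^ 2)) ^ (-a - 1) * c₀ *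
        Real.exp (-w / 2) ≤ postDensity a m L τ w κ := by
    rintro κ ⟨hκl, hκu⟩
    have hκpos : 0 < κ := hκ₂pos.trans hκl
    have hκlt1 : κ < 1 := hκu.trans_lt hκ₁lt1
    have h1 : (1/2 : ℝ) ^ (a + (m:ℝ)/2 - 1) ≤ κ ^ (a + (m:ℝ)/2 - 1) :=
      Real.rpow_le_rpow (by norm_num) (hκ₂half.trans hκl.le) hp0
    have hk2 : 1 - 2 * (t₀ * τ ^ 2) ≤ (1 + 2 * (t₀ * τ ^ 2))⁻¹ := by
      rw [show (1 + 2 * (t₀ * τ ^ 2))⁻¹ = 1 / (1 + 2 * (t₀ * τ ^ 2)) from (one_div _).symm,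
        le_div_iff₀ h12s]
      nlinarith
    have h2 : (2 * (t₀ * τ ^ 2)) ^ (-a - 1) ≤ (1 - κ) ^ (-a - 1) := by
      apply Real.rpow_le_rpow_of_nonpos (by linarith) (by linarith) (by linarith)
    have h3 : c₀ ≤ L ((κ⁻¹ - 1) / τ ^ 2) := by
      apply hLlow
      have hκinv : 1 + t₀ * τ ^ 2 ≤ κ⁻¹ := by
        have h := inv_anti₀ hκpos hκu
        rwa [inv_inv] at h
      rw [ge_iff_le, le_div_iff₀ (by positivity : (0:ℝ) < τ ^ 2)]
      linarith
    have h4 : Real.exp (-w / 2) ≤ Real.exp (-(κ * w) / 2) := by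
      apply Real.exp_le_exp.mpr
      nlinarith [mul_le_of_le_one_left hw hκlt1.le]
    unfold postDensity
    have e1 : (0:ℝ) ≤ (2 * (t₀ * τ ^ 2)) ^ (-a - 1) := Real.rpow_nonneg (by positivity) _
    have e2 : (0:ℝ) ≤ κ ^ (a + (m:ℝ)/2 - 1) := Real.rpow_nonneg hκpos.le _
    have e3 : (0:ℝ) ≤ κ ^ (a + (m:ℝ)/2 - 1) * (1 - κ) ^ (-a - 1) :=
      mul_nonneg e2 (Real.rpow_nonneg (by linarith) _)
    exact mul_le_mul (mul_le_mul (mul_le_mul h1 h2 e1 e2) h3 hc₀.le e3) h4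
      (Real.exp_nonneg _) (mul_nonneg e3 (hc₀.le.trans h3))
  have hvol : (MeasureTheory.volume
      (Set.Ioc (1 + 2 * (t₀ * τ ^ 2))⁻¹ (1 + t₀ * τ ^ 2)⁻¹)).toReal
      = (1 + t₀ * τ ^ 2)⁻¹ - (1 + 2 * (t₀ * τ ^ 2))⁻¹ := by
    rw [Real.volume_Ioc, ENNReal.toReal_ofReal (by linarith)]
  have hD1 : (1/2 : ℝ) ^ (a + (m:ℝ)/2 - 1) * (2 * (t₀ * τ ^ 2)) ^ (-a - 1) * c₀ *
      Real.exp (-w / 2) * ((1 + t₀ * τ ^ 2)⁻¹ - (1 + 2 * (t₀ * τ ^ 2))⁻¹)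
      ≤ ∫ κ in Set.Ioc (1 + 2 * (t₀ * τ ^ 2))⁻¹ (1 + t₀ * τ ^ 2)⁻¹,
        postDensity a m L τ w κ := by
    have h := MeasureTheory.setIntegral_ge_of_const_le measurableSet_Ioc
      (measure_Ioc_lt_top).ne hlow (hDI.mono_set hsubD)
    rw [measureReal_def, hvol, smul_eq_mul] at h; linarith
  have hfae : (0:ℝ→ℝ) ≤ᵐ[MeasureTheory.volume.restrict (Set.Ioc (0:ℝ) 1)]
      fun κ => postDensity a m L τ w κ := by
    filter_upwards [MeasureTheory.ae_restrict_mem measurableSet_Ioc] with κ hκ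
    exact hπnn κ hκ
  have hD2 : (∫ κ in Set.Ioc (1 + 2 * (t₀ * τ ^ 2))⁻¹ (1 + t₀ * τ ^ 2)⁻¹,
        postDensity a m L τ w κ)
      ≤ ∫ κ in Set.Ioc (0:ℝ) 1, postDensity a m L τ w κ :=
    MeasureTheory.setIntegral_mono_set hDI hfae (HasSubset.Subset.eventuallyLE hsubD)
  have h2s : (2 * (t₀ * τ ^ 2)) ^ (-a - 1) = (2:ℝ) ^ (-a - 1) * (t₀ * τ ^ 2) ^ (-a - 1) :=
    Real.mul_rpow (by norm_num) hs.le
  have hss : (t₀ * τ ^ 2) ^ (-a - 1) * (t₀ * τ ^ 2) = (t₀ * τ ^ 2) ^ (-a) := by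
    have h := (Real.rpow_add hs (-a - 1) 1).symm
    rw [Real.rpow_one] at h
    rw [h]
    congr 1
    ring
  have hd3 : (t₀ * τ ^ 2) / 3 ≤ (1 + t₀ * τ ^ 2)⁻¹ - (1 + 2 * (t₀ * τ ^ 2))⁻¹ := by
    have e : (1 + t₀ * τ ^ 2)⁻¹ - (1 + 2 * (t₀ * τ ^ 2))⁻¹
        = (t₀ * τ ^ 2) / ((1 + t₀ * τ ^ 2) * (1 + 2 * (t₀ * τ ^ 2))) := by
      field_simp
      ring
    rw [e]
    exact div_le_div_of_nonneg_left hs.le (by positivity) hprod3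
  have hDlow : (1/2 : ℝ) ^ (a + (m:ℝ)/2 - 1) * (2:ℝ) ^ (-a - 1) * c₀ / 3 *
      Real.exp (-w / 2) * (t₀ * τ ^ 2) ^ (-a)
      ≤ ∫ κ in Set.Ioc (0:ℝ) 1, postDensity a m L τ w κ := by
    refine le_trans ?_ (hD1.trans hD2)
    have hcLnn : (0:ℝ) ≤ (1/2 : ℝ) ^ (a + (m:ℝ)/2 - 1) * (2 * (t₀ * τ ^ 2)) ^ (-a - 1) * c₀ *
        Real.exp (-w / 2) := by
      have := Real.rpow_nonneg (show (0:ℝ) ≤ 1/2 by norm_num) (a + (m:ℝ)/2 - 1)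
      have := Real.rpow_nonneg (show (0:ℝ) ≤ 2 * (t₀ * τ ^ 2) by positivity) (-a - 1)
      positivity
    have heq : (1/2 : ℝ) ^ (a + (m:ℝ)/2 - 1) * (2:ℝ) ^ (-a - 1) * c₀ / 3 *
        Real.exp (-w / 2) * (t₀ * τ ^ 2) ^ (-a)
        = (1/2 : ℝ) ^ (a + (m:ℝ)/2 - 1) * (2 * (t₀ * τ ^ 2)) ^ (-a - 1) * c₀ *
          Real.exp (-w / 2) * ((t₀ * τ ^ 2) / 3) := by
      rw [h2s, ← hss]
      ring
    rw [heq]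
    exact mul_le_mul_of_nonneg_left hd3 hcLnn
  -- numerator
  have hsub1 : Set.Ioc (0:ℝ) (1 - δ) ⊆ Set.Ioc (0:ℝ) 1 := Set.Ioc_subset_Ioc_right (by linarith)
  have hsub2 : Set.Ioc (1 - δ) 1 ⊆ Set.Ioc (0:ℝ) 1 := Set.Ioc_subset_Ioc_left (by linarith)
  have hsplit : (∫ κ in Set.Ioc (0:ℝ) 1, (1 - κ) * postDensity a m L τ w κ)
      = (∫ κ in Set.Ioc (0:ℝ) (1 - δ), (1 - κ) * postDensity a m L τ w κ)
        + ∫ κ in Set.Ioc (1 - δ) 1, (1 - κ) * postDensity a m L τ w κ := by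
    rw [← Set.Ioc_union_Ioc_eq_Ioc (by linarith : (0:ℝ) ≤ 1 - δ) (by linarith : (1:ℝ) - δ ≤ 1)]
    exact MeasureTheory.setIntegral_union (Set.Ioc_disjoint_Ioc_of_le le_rfl) measurableSet_Ioc
      (hNI.mono_set hsub1) (hNI.mono_set hsub2)
  have hT1 : (∫ κ in Set.Ioc (0:ℝ) (1 - δ), (1 - κ) * postDensity a m L τ w κ)
      ≤ M * δ ^ (-a) := by
    have hpt : ∀ κ ∈ Set.Ioc (0:ℝ) (1 - δ),
        (1 - κ) * postDensity a m L τ w κ ≤ M * δ ^ (-a) := by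
      rintro κ ⟨hκ0, hκu⟩
      have hκlt1 : κ < 1 := by linarith
      have h1κ : 0 < 1 - κ := by linarith
      have hinv : 1 < κ⁻¹ := by
        rw [show κ⁻¹ = 1 / κ from (one_div κ).symm, lt_div_iff₀ hκ0]; linarith
      have harg : 0 < (κ⁻¹ - 1) / τ ^ 2 := div_pos (by linarith) (by positivity)
      have hu : (1 - κ) * (1 - κ) ^ (-a - 1) = (1 - κ) ^ (-a) := by
        have h := (Real.rpow_add h1κ (-a - 1) 1).symm
        rw [Real.rpow_one] at h
        rw [mul_comm, h]
        congr 1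
        ring
      have expand : (1 - κ) * postDensity a m L τ w κ
          = κ ^ (a + (m:ℝ)/2 - 1) * ((1 - κ) * (1 - κ) ^ (-a - 1)) *
            L ((κ⁻¹ - 1) / τ ^ 2) * Real.exp (-(κ * w) / 2) := by
        unfold postDensity; ring
      rw [expand, hu]
      have b1 : κ ^ (a + (m:ℝ)/2 - 1) ≤ 1 := Real.rpow_le_one hκ0.le (by linarith) hp0
      have b2 : (1 - κ) ^ (-a) ≤ δ ^ (-a) :=
        Real.rpow_le_rpow_of_nonpos hδ0 (by linarith) (by linarith)
      have b3 : L ((κ⁻¹ - 1) / τ ^ 2) ≤ M := hLup _ harg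
      have b4 : Real.exp (-(κ * w) / 2) ≤ 1 := by
        rw [Real.exp_le_one_iff]
        nlinarith [mul_nonneg hκ0.le hw]
      have n1 : (0:ℝ) ≤ (1 - κ) ^ (-a) := Real.rpow_nonneg h1κ.le _
      have n2 : (0:ℝ) ≤ κ ^ (a + (m:ℝ)/2 - 1) := Real.rpow_nonneg hκ0.le _
      have n3 : (0:ℝ) ≤ δ ^ (-a) := Real.rpow_nonneg hδ0.le _
      calc κ ^ (a + (m:ℝ)/2 - 1) * (1 - κ) ^ (-a) * L ((κ⁻¹ - 1) / τ ^ 2) *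
            Real.exp (-(κ * w) / 2)
          ≤ 1 * δ ^ (-a) * M * 1 := by
            apply mul_le_mul _ b4 (Real.exp_nonneg _)
            · have : (0:ℝ) ≤ 1 * δ ^ (-a) := by linarith
              nlinarith [hM.le]
            · apply mul_le_mul _ b3 (hLpos _ harg).le (by nlinarith)
              exact mul_le_mul b1 b2 n1 zero_le_one
        _ = M * δ ^ (-a) := by ring
    calc (∫ κ in Set.Ioc (0:ℝ) (1 - δ), (1 - κ) * postDensity a m L τ w κ)
        ≤ ∫ _κ in Set.Ioc (0:ℝ) (1 - δ), M * δ ^ (-a) :=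
          MeasureTheory.setIntegral_mono_on (hNI.mono_set hsub1)
            (MeasureTheory.integrableOn_const measure_Ioc_lt_top.ne)
            measurableSet_Ioc hpt
      _ = (MeasureTheory.volume (Set.Ioc (0:ℝ) (1 - δ))).toReal * (M * δ ^ (-a)) := by
          rw [MeasureTheory.setIntegral_const, smul_eq_mul, measureReal_def]
      _ ≤ M * δ ^ (-a) := by
          rw [Real.volume_Ioc, ENNReal.toReal_ofReal (by linarith)]
          have n3 : (0:ℝ) ≤ δ ^ (-a) := Real.rpow_nonneg hδ0.le _
          nlinarith [mul_nonneg hM.le n3]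
  have hT2 : (∫ κ in Set.Ioc (1 - δ) 1, (1 - κ) * postDensity a m L τ w κ)
      ≤ δ * ∫ κ in Set.Ioc (0:ℝ) 1, postDensity a m L τ w κ := by
    calc (∫ κ in Set.Ioc (1 - δ) 1, (1 - κ) * postDensity a m L τ w κ)
        ≤ ∫ κ in Set.Ioc (1 - δ) 1, δ * postDensity a m L τ w κ := by
          apply MeasureTheory.setIntegral_mono_on (hNI.mono_set hsub2)
            ((hDI.mono_set hsub2).const_mul δ) measurableSet_Ioc
          rintro κ hκ
          exact mul_le_mul_of_nonneg_right (by linarith [hκ.1]) (hπnn κ (hsub2 hκ))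
      _ = δ * ∫ κ in Set.Ioc (1 - δ) 1, postDensity a m L τ w κ := by
          rw [MeasureTheory.integral_const_mul]
      _ ≤ δ * ∫ κ in Set.Ioc (0:ℝ) 1, postDensity a m L τ w κ := by
          apply mul_le_mul_of_nonneg_left _ hδ0.le
          exact MeasureTheory.setIntegral_mono_set hDI hfae
            (HasSubset.Subset.eventuallyLE hsub2)
  -- final assembly
  set D := ∫ κ in Set.Ioc (0:ℝ) 1, postDensity a m L τ w κ with hD_def
  set N := ∫ κ in Set.Ioc (0:ℝ) 1, (1 - κ) * postDensity a m L τ w κ with hN_def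
  have hDlow0 : 0 < (1/2 : ℝ) ^ (a + (m:ℝ)/2 - 1) * (2:ℝ) ^ (-a - 1) * c₀ / 3 *
      Real.exp (-w / 2) * (t₀ * τ ^ 2) ^ (-a) :=
    mul_pos (mul_pos hC (Real.exp_pos _)) (Real.rpow_pos_of_pos hs _)
  have hD0 : 0 < D := hDlow0.trans_le hDlow
  have hNb : N ≤ M * δ ^ (-a) + δ * D := by
    rw [hsplit]
    exact add_le_add hT1 hT2
  have step1 : N / D ≤ (M * δ ^ (-a) + δ * D) / D := (div_le_div_iff_of_pos_right hD0).mpr hNb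
  have step2 : (M * δ ^ (-a) + δ * D) / D = δ + M * δ ^ (-a) / D := by
    field_simp
    ring
  have step3 : M * δ ^ (-a) / D
      ≤ M * δ ^ (-a) / ((1/2 : ℝ) ^ (a + (m:ℝ)/2 - 1) * (2:ℝ) ^ (-a - 1) * c₀ / 3 *
        Real.exp (-w / 2) * (t₀ * τ ^ 2) ^ (-a)) := by
    apply div_le_div_of_nonneg_left (mul_nonneg hM.le (Real.rpow_nonneg hδ0.le _)) hDlow0 hDlow
  have step4 : M * δ ^ (-a) / ((1/2 : ℝ) ^ (a + (m:ℝ)/2 - 1) * (2:ℝ) ^ (-a - 1) * c₀ / 3 *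
        Real.exp (-w / 2) * (t₀ * τ ^ 2) ^ (-a))
      = M * δ ^ (-a) * Real.exp (w / 2) * (t₀ * τ ^ 2) ^ a /
        ((1 / 2 : ℝ) ^ (a + (m : ℝ) / 2 - 1) * (2 : ℝ) ^ (-a - 1) * c₀ / 3) := by
    rw [show Real.exp (-w / 2) = (Real.exp (w / 2))⁻¹ by
        rw [← Real.exp_neg]; congr 1; ring,
      Real.rpow_neg hs.le]
    have e1 : Real.exp (w / 2) ≠ 0 := (Real.exp_pos _).ne'
    have e2 : (t₀ * τ ^ 2) ^ a ≠ 0 := (Real.rpow_pos_of_pos hs a).ne'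
    field_simp
  calc N / D ≤ δ + M * δ ^ (-a) / D := by rw [← step2]; exact step1
    _ ≤ _ := by rw [step4] at step3; linarith

/-- **Proposition 1.** In the shrinkage prior setup with `a ≥ 1/2` and `L` satisfying Assumption 1,
if `τ_n → 0` and each `W_n` is chi-squared distributed with `m` degrees of freedom (i.e. Gamma
with shape `m/2`, rate `1/2`), then the posterior shrinkage weight `R(τ_n, W_n) → 0` in
probability. -/
theorem prop1_inactive_group_shrinks
    {Ω : Type*} [MeasureSpace Ω] [IsProbabilityMeasure (ℙ : Measure Ω)]
    (a : ℝ) (ha : 1 / 2 ≤ a) (m : ℕ) (hm : 1 ≤ m)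
    (L : ℝ → ℝ) (hLmeas : Measurable L) (hLpos : ∀ x > 0, 0 < L x)
    (hLsv : ∀ c > 0, Tendsto (fun x => L (c * x) / L x) atTop (nhds 1))
    (c₀ t₀ : ℝ) (hc₀ : 0 < c₀) (ht₀ : 0 < t₀) (hLlow : ∀ t ≥ t₀, c₀ ≤ L t)
    (M : ℝ) (hLup : ∀ t > 0, L t ≤ M)
    (K : ℝ) (hK : 0 < K)
    (hLint : IntegrableOn (fun t : ℝ => t ^ (-a - 1) * L t) (Set.Ioi 0))
    (hKval : ∫ t in Set.Ioi (0 : ℝ), t ^ (-a - 1) * L t = 1 / K)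
    (τ : ℕ → ℝ) (hτpos : ∀ n, 0 < τ n) (hτ0 : Tendsto τ atTop (nhds 0))
    (W : ℕ → Ω → ℝ) (hWmeas : ∀ n, Measurable (W n))
    (hWlaw : ∀ n, Measure.map (W n) ℙ = gammaMeasure ((m : ℝ) / 2) (1 / 2)) :
    ∀ ε > (0 : ℝ),
      Tendsto (fun n => ℙ {ω | ε < shrinkWeight a m L (τ n) (W n ω)}) atTop (nhds 0) := by
  intro ε hε
  have hM : 0 < M := hc₀.trans_le ((hLlow t₀ le_rfl).trans (hLup t₀ ht₀))
  have hm1 : (1 : ℝ) ≤ (m : ℝ) := by exact_mod_cast hm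
  -- the constant from the key bound
  set C : ℝ := (1 / 2 : ℝ) ^ (a + (m : ℝ) / 2 - 1) * (2 : ℝ) ^ (-a - 1) * c₀ / 3 with hC_def
  have hC : 0 < C := by
    have h1 : (0:ℝ) < (1 / 2 : ℝ) ^ (a + (m : ℝ) / 2 - 1) := Real.rpow_pos_of_pos (by norm_num) _
    have h2 : (0:ℝ) < (2 : ℝ) ^ (-a - 1) := Real.rpow_pos_of_pos (by norm_num) _
    rw [hC_def]; positivity
  set δ : ℝ := min (ε / 2) (1 / 2) with hδ_def
  have hδ0 : 0 < δ := lt_min (by linarith) (by norm_num)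
  have hδ1 : δ < 1 := (min_le_right _ _).trans_lt (by norm_num)
  have hδε : δ ≤ ε / 2 := min_le_left _ _
  have hMδ : 0 < M * δ ^ (-a) := mul_pos hM (Real.rpow_pos_of_pos hδ0 _)
  set A : ℕ → ℝ := fun n => ε / 2 * C / (M * δ ^ (-a)) * (t₀ * (τ n) ^ 2) ^ (-a) with hA_def
  have hτsq : ∀ n, 0 < t₀ * (τ n) ^ 2 := fun n => mul_pos ht₀ (pow_pos (hτpos n) 2)
  have hApos : ∀ n, 0 < A n := fun n =>
    mul_pos (div_pos (mul_pos (by linarith) hC) hMδ) (Real.rpow_pos_of_pos (hτsq n) _)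
  set b : ℕ → ℝ := fun n => 2 * Real.log (A n) with hb_def
  -- τₙ² → 0
  have hs0 : Tendsto (fun n => t₀ * (τ n) ^ 2) atTop (nhds 0) := by
    have h := (hτ0.pow 2).const_mul t₀
    simpa using h
  -- b n → ∞
  have hbtop : Tendsto b atTop atTop := by
    have h1 : Tendsto (fun n => t₀ * (τ n) ^ 2) atTop (nhdsWithin 0 (Set.Ioi 0)) :=
      tendsto_nhdsWithin_of_tendsto_nhds_of_eventually_within _ hs0
        (Eventually.of_forall fun n => Set.mem_Ioi.mpr (hτsq n))
    have h2 : Tendsto (fun n => (t₀ * (τ n) ^ 2)⁻¹) atTop atTop :=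
      tendsto_inv_nhdsGT_zero.comp h1
    have h3 : Tendsto (fun n => (t₀ * (τ n) ^ 2) ^ (-a)) atTop atTop := by
      have h4 := (tendsto_rpow_atTop (show (0:ℝ) < a by linarith)).comp h2
      refine h4.congr fun n => ?_
      simp only [Function.comp_apply]
      rw [Real.inv_rpow (hτsq n).le, ← Real.rpow_neg (hτsq n).le]
    have h5 : Tendsto A atTop atTop :=
      h3.const_mul_atTop (div_pos (mul_pos (by linarith) hC) hMδ)
    exact (Real.tendsto_log_atTop.comp h5).const_mul_atTop two_pos
  -- gamma measure facts
  have hμprob : IsProbabilityMeasure (gammaMeasure ((m : ℝ) / 2) (1 / 2)) :=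
    isProbabilityMeasure_gammaMeasure (by linarith) (by norm_num)
  have hIio0 : gammaMeasure ((m : ℝ) / 2) (1 / 2) (Set.Iio 0) = 0 := by
    rw [gammaMeasure, withDensity_apply _ measurableSet_Iio]
    exact lintegral_gammaPDF_of_nonpos le_rfl
  have hmap : ∀ n (AA : Set ℝ), MeasurableSet AA →
      ℙ (W n ⁻¹' AA) = gammaMeasure ((m : ℝ) / 2) (1 / 2) AA := by
    intro n AA hAA
    rw [← hWlaw n, Measure.map_apply (hWmeas n) hAA]
  -- tail of the gamma measure vanishes
  have hIoi : Tendsto (fun n => gammaMeasure ((m : ℝ) / 2) (1 / 2) (Set.Ioi (b n)))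
      atTop (nhds 0) := by
    have hIic : Tendsto (fun n => gammaMeasure ((m : ℝ) / 2) (1 / 2) (Set.Iic (b n)))
        atTop (nhds 1) := by
      have h := (tendsto_measure_Iic_atTop (gammaMeasure ((m : ℝ) / 2) (1 / 2))).comp hbtop
      rwa [measure_univ] at h
    have heq : ∀ n, gammaMeasure ((m : ℝ) / 2) (1 / 2) (Set.Ioi (b n))
        = 1 - gammaMeasure ((m : ℝ) / 2) (1 / 2) (Set.Iic (b n)) := by
      intro n
      rw [← Set.compl_Iic]
      exact prob_compl_eq_one_sub measurableSet_Iic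
    have h := ENNReal.Tendsto.sub
      (tendsto_const_nhds : Tendsto (fun _ : ℕ => (1:ℝ≥0∞)) atTop (nhds 1)) hIic
      (Or.inl ENNReal.one_ne_top)
    simp only [tsub_self] at h
    exact h.congr fun n => (heq n).symm
  -- eventually small τ
  have hsmall : ∀ᶠ n in atTop, 2 * (t₀ * (τ n) ^ 2) ≤ 1 := by
    filter_upwards [hs0.eventually (eventually_le_nhds (show (0:ℝ) < 1/2 by norm_num))] with n hn
    linarith
  -- event inclusion
  have hincl : ∀ n, 2 * (t₀ * (τ n) ^ 2) ≤ 1 →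
      {ω | ε < shrinkWeight a m L (τ n) (W n ω)} ⊆
        W n ⁻¹' Set.Iio 0 ∪ W n ⁻¹' Set.Ioi (b n) := by
    intro n hn ω hω
    by_contra hcon
    simp only [Set.mem_union, Set.mem_preimage, Set.mem_Iio, Set.mem_Ioi, not_or,
      not_lt] at hcon
    obtain ⟨hw0, hwb⟩ := hcon
    have hkey := shrink_bound a ha m hm L hLpos c₀ t₀ hc₀ ht₀ hLlow M hLup
      (τ n) (W n ω) δ (hτpos n) hn hw0 hδ0 hδ1
    have hexpA : Real.exp (W n ω / 2) ≤ A n := by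
      have : W n ω / 2 ≤ Real.log (A n) := by
        rw [hb_def] at hwb
        simp only at hwb
        linarith
      calc Real.exp (W n ω / 2) ≤ Real.exp (Real.log (A n)) := Real.exp_le_exp.mpr this
        _ = A n := Real.exp_log (hApos n)
    have hsa : (0:ℝ) ≤ (t₀ * (τ n) ^ 2) ^ a := Real.rpow_nonneg (hτsq n).le _
    have hmono : M * δ ^ (-a) * Real.exp (W n ω / 2) * (t₀ * (τ n) ^ 2) ^ a / C
        ≤ M * δ ^ (-a) * A n * (t₀ * (τ n) ^ 2) ^ a / C := by
      apply (div_le_div_iff_of_pos_right hC).mpr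
      apply mul_le_mul_of_nonneg_right _ hsa
      exact mul_le_mul_of_nonneg_left hexpA hMδ.le
    have heq2 : M * δ ^ (-a) * A n * (t₀ * (τ n) ^ 2) ^ a / C = ε / 2 := by
      have hss1 : (t₀ * (τ n) ^ 2) ^ (-a) * (t₀ * (τ n) ^ 2) ^ a = 1 := by
        rw [← Real.rpow_add (hτsq n)]
        norm_num
      rw [div_eq_iff hC.ne', hA_def]
      simp only
      have e : M * δ ^ (-a) * (ε / 2 * C / (M * δ ^ (-a)) * (t₀ * (τ n) ^ 2) ^ (-a)) *
            (t₀ * (τ n) ^ 2) ^ a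
          = (ε / 2 * C / (M * δ ^ (-a)) * (M * δ ^ (-a))) *
            ((t₀ * (τ n) ^ 2) ^ (-a) * (t₀ * (τ n) ^ 2) ^ a) := by ring
      rw [e, hss1, mul_one, div_mul_cancel₀ _ hMδ.ne']
    have : shrinkWeight a m L (τ n) (W n ω) ≤ ε := by
      calc shrinkWeight a m L (τ n) (W n ω)
          ≤ δ + M * δ ^ (-a) * Real.exp (W n ω / 2) * (t₀ * (τ n) ^ 2) ^ a / C := hkey
        _ ≤ δ + M * δ ^ (-a) * A n * (t₀ * (τ n) ^ 2) ^ a / C := by linarith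
        _ = δ + ε / 2 := by rw [heq2]
        _ ≤ ε := by linarith
    have hω' : ε < shrinkWeight a m L (τ n) (W n ω) := hω
    linarith
  -- squeeze
  refine tendsto_of_tendsto_of_tendsto_of_le_of_le'
    (tendsto_const_nhds) hIoi (Eventually.of_forall fun n => zero_le) ?_
  filter_upwards [hsmall] with n hn
  calc ℙ {ω | ε < shrinkWeight a m L (τ n) (W n ω)}
      ≤ ℙ (W n ⁻¹' Set.Iio 0 ∪ W n ⁻¹' Set.Ioi (b n)) := measure_mono (hincl n hn)
    _ ≤ ℙ (W n ⁻¹' Set.Iio 0) + ℙ (W n ⁻¹' Set.Ioi (b n)) := measure_union_le _ _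
    _ = gammaMeasure ((m : ℝ) / 2) (1 / 2) (Set.Ioi (b n)) := by
        rw [hmap n _ measurableSet_Iio, hmap n _ measurableSet_Ioi, hIio0, zero_add]
end

section
/- Let m ≥ 2 be an integer and let M be a real number with M > m + 2. Let μ_m be the Gamma distribution on ℝ with shape parameter m/2 and rate parameter 1/2 (equivalently, the chi-squared distribution with m degrees of freedom). Then e^{−M/2} (M/2)^{m/2−1} / Γ(m/2) ≤ μ_m((M, ∞)) ≤ (m/2) · e^{−M/2} (M/2)^{m/2−1} / Γ(m/2). (Two-sided tail bound (5.31) for central chi-squared distributions, used in the proof of Theorem 1.) -/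
open MeasureTheory ProbabilityTheory Real Set Filter Topology

namespace ChiSqTailAux

lemma int_g {s M : ℝ} (hs : -1 < s) (hM : 0 < M) :
    IntegrableOn (fun x : ℝ => x ^ s * Real.exp (-(1/2 * x))) (Ioi M) := by
  have h := integrableOn_rpow_mul_exp_neg_mul_rpow hs (zero_lt_one : (0:ℝ) < 1) (by norm_num : (0:ℝ) < 1/2)
  have h' : IntegrableOn (fun x : ℝ => x ^ s * Real.exp (-(1/2 * x))) (Ioi 0) := by
    refine h.congr_fun (fun x _ => ?_) measurableSet_Ioi
    simp only [Real.rpow_one]; ring_nf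
  exact h'.mono_set (Ioi_subset_Ioi hM.le)

lemma hasDerivAt_g (a : ℝ) {x : ℝ} (hx : 0 < x) :
    HasDerivAt (fun y : ℝ => y ^ (a-1) * Real.exp (-(1/2 * y)))
      (((a-1)/x - 1/2) * (x ^ (a-1) * Real.exp (-(1/2 * x)))) x := by
  have h1 : HasDerivAt (fun y : ℝ => y ^ (a-1)) ((a-1) * x ^ (a-1-1)) x :=
    Real.hasDerivAt_rpow_const (Or.inl hx.ne')
  have h2 : HasDerivAt (fun y : ℝ => Real.exp (-(1/2 * y))) (-(1/2) * Real.exp (-(1/2*x))) x := by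
    have h0 : HasDerivAt (fun y : ℝ => -(1/2 * y)) (-(1/2)) x := by
      simpa using ((hasDerivAt_id' x).const_mul (1/2 : ℝ)).fun_neg
    simpa [mul_comm] using h0.exp
  refine (h1.mul h2).congr_deriv ?_
  have hx' : x ^ (a-1-1) = x ^ (a-1) / x := by
    rw [Real.rpow_sub hx, Real.rpow_one]
  rw [hx']
  field_simp
  ring

/-- integrability of `c * (1/2 - (a-1)/x) * (x^(a-1) * exp(-(x/2)))` on `(M,∞)`. -/
lemma int_slope (a c M : ℝ) (ha : 1 ≤ a) (hM : 0 < M) :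
    IntegrableOn (fun x : ℝ => c * (1/2 - (a-1)/x) * (x ^ (a-1) * Real.exp (-(1/2 * x))))
      (Ioi M) := by
  have hg : IntegrableOn (fun x : ℝ => (|c| * (1/2 + (a-1)/M)) * (x ^ (a-1) * Real.exp (-(1/2 * x))))
      (Ioi M) := ((int_g (by linarith : (-1:ℝ) < a - 1) hM).const_mul _)
  refine Integrable.mono' hg ?_ ?_
  · apply Measurable.aestronglyMeasurable
    fun_prop
  · rw [ae_restrict_iff' measurableSet_Ioi]
    filter_upwards with x hx
    have hx0 : 0 < x := hM.trans hx
    have hgn : 0 ≤ x ^ (a-1) * Real.exp (-(1/2 * x)) := by positivity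
    have hdivn : 0 ≤ (a-1)/x := div_nonneg (by linarith) hx0.le
    have hdivle : (a-1)/x ≤ (a-1)/M := by
      rw [div_le_div_iff₀ hx0 hM]; nlinarith [le_of_lt (show M < x from hx)]
    have habs : |1/2 - (a-1)/x| ≤ 1/2 + (a-1)/M := by
      rw [abs_le]; constructor <;> nlinarith
    rw [norm_mul, norm_mul]
    rw [Real.norm_eq_abs, Real.norm_eq_abs, Real.norm_eq_abs, abs_of_nonneg hgn]
    have h1 : |c| * |1/2 - (a-1)/x| ≤ |c| * (1/2 + (a-1)/M) :=
      mul_le_mul_of_nonneg_left habs (abs_nonneg c)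
    exact mul_le_mul_of_nonneg_right h1 hgn

/-- FTC: `∫_M^∞ c (1/2 - (a-1)/x) x^(a-1) e^{-x/2} dx = c M^(a-1) e^{-M/2}`. -/
lemma key (a c M : ℝ) (ha : 1 ≤ a) (hM : 0 < M) :
    ∫ x in Ioi M, c * (1/2 - (a-1)/x) * (x ^ (a-1) * Real.exp (-(1/2 * x)))
      = c * (M ^ (a-1) * Real.exp (-(1/2 * M))) := by
  have hderiv : ∀ x ∈ Ici M, HasDerivAt (fun y : ℝ => (-c) * (y ^ (a-1) * Real.exp (-(1/2 * y))))
      ((-c) * (((a-1)/x - 1/2) * (x ^ (a-1) * Real.exp (-(1/2 * x))))) x :=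
    fun x hx => ((hasDerivAt_g a (lt_of_lt_of_le hM hx)).const_mul (-c))
  have hint : IntegrableOn (fun x : ℝ => (-c) * (((a-1)/x - 1/2) * (x ^ (a-1) * Real.exp (-(1/2 * x)))))
      (Ioi M) := by
    refine (int_slope a c M ha hM).congr_fun (fun x _ => ?_) measurableSet_Ioi
    ring
  have htend : Tendsto (fun y : ℝ => (-c) * (y ^ (a-1) * Real.exp (-(1/2 * y)))) atTop (𝓝 0) := by
    have h0 := (tendsto_rpow_mul_exp_neg_mul_atTop_nhds_zero (a-1) (1/2) (by norm_num)).const_mul (-c)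
    rw [mul_zero] at h0
    refine h0.congr (fun y => ?_)
    ring_nf
  have := integral_Ioi_of_hasDerivAt_of_tendsto' hderiv hint htend
  have heq : ∀ x : ℝ, c * (1/2 - (a-1)/x) * (x ^ (a-1) * Real.exp (-(1/2 * x)))
      = (-c) * (((a-1)/x - 1/2) * (x ^ (a-1) * Real.exp (-(1/2 * x)))) := fun x => by ring
  simp_rw [heq]
  rw [this]
  ring

/-- Tail of the Gamma(a, 1/2) measure as a real integral. -/
lemma measure_eq (a M : ℝ) (ha : 0 < a) (hM : 0 < M) :
    gammaMeasure a (1/2) (Set.Ioi M) =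
      ENNReal.ofReal (∫ x in Ioi M,
        (1/2:ℝ) ^ a / Real.Gamma a * x ^ (a-1) * Real.exp (-(1/2 * x))) := by
  have hG : 0 < Real.Gamma a := Real.Gamma_pos_of_pos ha
  have hint : IntegrableOn
      (fun x : ℝ => (1/2:ℝ) ^ a / Real.Gamma a * x ^ (a-1) * Real.exp (-(1/2 * x))) (Ioi M) := by
    have h0 : IntegrableOn (fun x : ℝ =>
        (1/2:ℝ) ^ a / Real.Gamma a * (x ^ (a-1) * Real.exp (-(1/2 * x)))) (Ioi M) :=
      (int_g (by linarith : (-1:ℝ) < a - 1) hM).const_mul ((1/2:ℝ) ^ a / Real.Gamma a)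
    refine h0.congr_fun (fun x _ => ?_) measurableSet_Ioi
    ring
  have hnn : 0 ≤ᵐ[volume.restrict (Ioi M)]
      (fun x : ℝ => (1/2:ℝ) ^ a / Real.Gamma a * x ^ (a-1) * Real.exp (-(1/2 * x))) := by
    rw [EventuallyLE, ae_restrict_iff' measurableSet_Ioi]
    filter_upwards with x hx
    have hx0 : 0 < x := hM.trans hx
    positivity
  rw [gammaMeasure, withDensity_apply _ measurableSet_Ioi,
    setLIntegral_congr_fun measurableSet_Ioi
      (fun x (hx : M < x) => gammaPDF_of_nonneg (le_of_lt (hM.trans hx))),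
    ← ofReal_integral_eq_lintegral_ofReal hint hnn]

end ChiSqTailAux

open MeasureTheory ProbabilityTheory
open ChiSqTailAux

/-- **Two-sided chi-squared tail bound (5.31), used in the proof of Theorem 1.** Let `m ≥ 2` be an
integer and `M > m + 2`. Let `μ_m` be the Gamma distribution with shape `m/2` and rate `1/2`
(the chi-squared distribution with `m` degrees of freedom). Then
`e^(-M/2) (M/2)^(m/2-1) / Γ(m/2) ≤ μ_m((M,∞)) ≤ (m/2) e^(-M/2) (M/2)^(m/2-1) / Γ(m/2)`. -/
theorem chi_squared_tail_bounds (m : ℕ) (hm : 2 ≤ m) (M : ℝ) (hM : (m : ℝ) + 2 < M) :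
    ENNReal.ofReal (Real.exp (-M / 2) * (M / 2) ^ ((m : ℝ) / 2 - 1) / Real.Gamma ((m : ℝ) / 2)) ≤
        gammaMeasure ((m : ℝ) / 2) (1 / 2) (Set.Ioi M) ∧
      gammaMeasure ((m : ℝ) / 2) (1 / 2) (Set.Ioi M) ≤
        ENNReal.ofReal ((m : ℝ) / 2 *
          (Real.exp (-M / 2) * (M / 2) ^ ((m : ℝ) / 2 - 1) / Real.Gamma ((m : ℝ) / 2))) := by
  have hm' : (2:ℝ) ≤ (m:ℝ) := by exact_mod_cast hm
  set a : ℝ := (m:ℝ)/2 with ha_def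
  have ha1 : 1 ≤ a := by rw [ha_def]; linarith
  have ha0 : 0 < a := by linarith
  have hMa : 2*a + 2 < M := by rw [ha_def]; push_cast; linarith
  have hM0 : 0 < M := by linarith
  have hG : 0 < Real.Gamma a := Real.Gamma_pos_of_pos ha0
  set K : ℝ := (1/2:ℝ) ^ a / Real.Gamma a with hK_def
  have hK : 0 < K := by rw [hK_def]; positivity
  -- power algebra
  have hsplit : (1/2:ℝ) ^ a = (1/2:ℝ) ^ (a-1) * (1/2) := by
    rw [show a = (a-1) + 1 by ring, Real.rpow_add_one (by norm_num : (1/2:ℝ) ≠ 0)]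
    ring_nf
  have hMsplit : (M/2) ^ (a-1) = M ^ (a-1) * (1/2:ℝ) ^ (a-1) := by
    rw [show M/2 = M * (1/2) by ring, Real.mul_rpow hM0.le (by norm_num)]
  have hexp : Real.exp (-(1/2 * M)) = Real.exp (-M/2) := by rw [show -(1/2 * M) = -M/2 by ring]
  rw [measure_eq a M ha0 hM0]
  have hintf : IntegrableOn
      (fun x : ℝ => K * x ^ (a-1) * Real.exp (-(1/2 * x))) (Set.Ioi M) := by
    have h0 : IntegrableOn (fun x : ℝ =>
        K * (x ^ (a-1) * Real.exp (-(1/2 * x)))) (Set.Ioi M) :=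
      (int_g (by linarith : (-1:ℝ) < a - 1) hM0).const_mul K
    exact h0.congr_fun (fun x _ => by ring) measurableSet_Ioi
  constructor
  · -- lower bound
    apply ENNReal.ofReal_le_ofReal
    have hkey := key a (2*K) M ha1 hM0
    have heq : 2*K * (M ^ (a-1) * Real.exp (-(1/2 * M)))
        = Real.exp (-M / 2) * (M / 2) ^ (a - 1) / Real.Gamma a := by
      rw [hexp, hMsplit, hK_def, hsplit]
      field_simp
    rw [← heq, ← hkey]
    refine setIntegral_mono_on (int_slope a (2*K) M ha1 hM0) hintf measurableSet_Ioi ?_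
    intro x hx
    have hx0 : 0 < x := hM0.trans hx
    have hgn : 0 ≤ x ^ (a-1) * Real.exp (-(1/2 * x)) := by positivity
    have hdivn : 0 ≤ (a-1)/x := div_nonneg (by linarith) hx0.le
    have h1 : 2*K * (1/2 - (a-1)/x) ≤ K := by nlinarith
    calc 2*K * (1/2 - (a-1)/x) * (x ^ (a-1) * Real.exp (-(1/2 * x)))
        ≤ K * (x ^ (a-1) * Real.exp (-(1/2 * x))) := mul_le_mul_of_nonneg_right h1 hgn
      _ = K * x ^ (a-1) * Real.exp (-(1/2 * x)) := by ring
  · -- upper bound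
    apply ENNReal.ofReal_le_ofReal
    have hden : 0 < M - 2*a + 2 := by linarith
    set c : ℝ := 2*K*M/(M - 2*a + 2) with hc_def
    have hc0 : 0 < c := by rw [hc_def]; positivity
    have hkey := key a c M ha1 hM0
    have step1 : ∫ x in Set.Ioi M, K * x ^ (a-1) * Real.exp (-(1/2 * x))
        ≤ c * (M ^ (a-1) * Real.exp (-(1/2 * M))) := by
      rw [← hkey]
      refine setIntegral_mono_on hintf (int_slope a c M ha1 hM0) measurableSet_Ioi ?_
      intro x hx
      have hx0 : 0 < x := hM0.trans hx
      have hgn : 0 ≤ x ^ (a-1) * Real.exp (-(1/2 * x)) := by positivity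
      have hdivle : (a-1)/x ≤ (a-1)/M := by
        rw [div_le_div_iff₀ hx0 hM0]; nlinarith [le_of_lt (show M < x from hx)]
      have hcM : c * (1/2 - (a-1)/M) = K := by
        rw [hc_def]; field_simp; ring
      have h1 : K ≤ c * (1/2 - (a-1)/x) := by nlinarith
      calc K * x ^ (a-1) * Real.exp (-(1/2 * x))
          = K * (x ^ (a-1) * Real.exp (-(1/2 * x))) := by ring
        _ ≤ c * (1/2 - (a-1)/x) * (x ^ (a-1) * Real.exp (-(1/2 * x))) :=
            mul_le_mul_of_nonneg_right h1 hgn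
    refine step1.trans ?_
    have hMa' : M / (M - 2*a + 2) ≤ a := by
      rw [div_le_iff₀ hden]; nlinarith
    have heq2 : c * (M ^ (a-1) * Real.exp (-(1/2 * M)))
        = (M / (M - 2*a + 2)) * ((1/2:ℝ) ^ (a-1) * M ^ (a-1) * Real.exp (-M/2) / Real.Gamma a) := by
      rw [hexp, hc_def, hK_def, hsplit]
      field_simp
    have heq3 : a * (Real.exp (-M / 2) * (M / 2) ^ (a - 1) / Real.Gamma a)
        = a * ((1/2:ℝ) ^ (a-1) * M ^ (a-1) * Real.exp (-M/2) / Real.Gamma a) := by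
      rw [hMsplit]; ring
    rw [heq2, heq3]
    have hpos : 0 ≤ (1/2:ℝ) ^ (a-1) * M ^ (a-1) * Real.exp (-M/2) / Real.Gamma a := by positivity
    exact mul_le_mul_of_nonneg_right hMa' hpos
end
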